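/- arXiv:1707.04697 — 11 statements merged into one kernel-verified Lean document; each statement's English description precedes it below -/
import Mathlib

section
/- Let R be a commutative ring with identity which is not an integral domain, and suppose that the set of nonzero annihilating ideals of R has at least two elements. Then the annihilator-ideal graph A_I(R) is connected with diameter at most 2; moreover, if A_I(R) contains a cycle, then its girth is at most 4. -/
/-- The vertex set of the annihilator-ideal/annihilating-ideal graphs:
nonzero ideals with nonzero annihilator. -/
abbrev AnnVert (R : Type*) [CommRing R] : Type _ :=
  {I : Ideal R // I ≠ ⊥ ∧ Submodule.annihilator I ≠ ⊥}

/-- The annihilator-ideal graph `A_I(R)`. -/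
def annihilatorIdealGraph (R : Type*) [CommRing R] : SimpleGraph (AnnVert R) where
  Adj I J := I ≠ J ∧
    ((Submodule.annihilator (I.1 * J.1) : Ideal R) : Set R) ≠
      ↑(Submodule.annihilator I.1) ∪ ↑(Submodule.annihilator J.1)
  symm := by
    constructor
    rintro I J ⟨hne, h⟩
    exact ⟨hne.symm, by rwa [mul_comm, Set.union_comm]⟩
  loopless := by constructor; rintro I ⟨h, -⟩; exact h rfl

/-- The annihilating-ideal graph `𝔸𝔾(R)`. -/
def annihilatingIdealGraph (R : Type*) [CommRing R] : SimpleGraph (AnnVert R) where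
  Adj I J := I ≠ J ∧ I.1 * J.1 = ⊥
  symm := by constructor; rintro I J ⟨hne, h⟩; exact ⟨hne.symm, by rwa [mul_comm]⟩
  loopless := by constructor; rintro I ⟨h, -⟩; exact h rfl

/-- `G` is a complete bipartite graph with parts `s` and `t`. -/
def SimpleGraph.IsCompleteBipartiteWith {V : Type*} (G : SimpleGraph V) (s t : Set V) : Prop :=
  Disjoint s t ∧ s ∪ t = Set.univ ∧
    ∀ u v, G.Adj u v ↔ (u ∈ s ∧ v ∈ t) ∨ (u ∈ t ∧ v ∈ s)

/-- `G` is a star graph: complete bipartite with one part a single vertex and the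
other part nonempty. -/
def SimpleGraph.IsStarGraph {V : Type*} (G : SimpleGraph V) : Prop :=
  ∃ (c : V) (t : Set V), t.Nonempty ∧ G.IsCompleteBipartiteWith {c} t

open SimpleGraph

/-! ### Auxiliary graph-theoretic lemmas -/

namespace AuxGraph
variable {V : Type*} {G : SimpleGraph V}

lemma egirth_le_length {a : V} {w : G.Walk a a} (hw : w.IsCycle) :
    G.egirth ≤ w.length := by
  rw [SimpleGraph.egirth]
  exact iInf_le_of_le a (iInf_le_of_le w (iInf_le_of_le hw le_rfl))

lemma isCycle_triangle {a b c : V} (hab : G.Adj a b) (hbc : G.Adj b c) (hca : G.Adj c a) :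
    ((Walk.cons hab (Walk.cons hbc (Walk.cons hca Walk.nil))) : G.Walk a a).IsCycle := by
  simp [Walk.isCycle_def, Walk.isTrail_def, Sym2.eq_iff, hab.ne, hbc.ne, hca.ne,
    hab.ne', hbc.ne', hca.ne', List.Nodup]

lemma isCycle_quad {a b c d : V} (hac : a ≠ c) (hbd : b ≠ d)
    (hab : G.Adj a b) (hbc : G.Adj b c) (hcd : G.Adj c d) (hda : G.Adj d a) :
    ((Walk.cons hab (Walk.cons hbc (Walk.cons hcd (Walk.cons hda Walk.nil)))) :
      G.Walk a a).IsCycle := by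
  simp [Walk.isCycle_def, Walk.isTrail_def, Sym2.eq_iff, hab.ne, hbc.ne, hcd.ne, hda.ne,
    hab.ne', hbc.ne', hcd.ne', hda.ne', hac, hbd, hac.symm, hbd.symm, List.Nodup]

lemma getVert_eq_support_getElem {u v : V} (p : G.Walk u v) {i : ℕ} (h : i ≤ p.length) :
    p.getVert i = p.support[i]'(by rw [SimpleGraph.Walk.length_support]; omega) := by
  induction p generalizing i with
  | nil => simp_all [Walk.getVert]
  | cons h' q ih =>
    cases i with
    | zero => simp
    | succ n =>
      simp only [Walk.getVert_cons_succ, Walk.support_cons, List.getElem_cons_succ]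
      exact ih (by simpa using h)

lemma IsCycle.getVert_ne {v : V} {p : G.Walk v v} (hp : p.IsCycle) {i j : ℕ}
    (h1 : 1 ≤ i) (hij : i < j) (hj : j ≤ p.length) : p.getVert i ≠ p.getVert j := by
  have hnd : p.support.tail.Nodup := ((Walk.isCycle_def _).mp hp).2.2
  rw [getVert_eq_support_getElem p (le_trans (le_of_lt hij) hj),
    getVert_eq_support_getElem p hj]
  have hlen : p.support.length = p.length + 1 := Walk.length_support p
  have h1' : i - 1 < p.support.tail.length := by simp [hlen]; omega
  have h2' : j - 1 < p.support.tail.length := by simp [hlen]; omega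
  have e1 : p.support[i]'(by omega) = p.support.tail[i-1]'h1' := by
    rw [List.getElem_tail]; congr 1; omega
  have e2 : p.support[j]'(by omega) = p.support.tail[j-1]'h2' := by
    rw [List.getElem_tail]; congr 1; omega
  rw [e1, e2]
  intro hEq
  have := (hnd.getElem_inj_iff).mp hEq
  omega

end AuxGraph

/-! ### Auxiliary ring-theoretic lemmas -/

namespace AuxRing
variable {R : Type*} [CommRing R]

lemma one_not_mem_ann (I : AnnVert R) : (1 : R) ∉ Submodule.annihilator I.1 := by
  intro h
  apply I.2.1
  rw [eq_bot_iff]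
  intro x hx
  have := Submodule.mem_annihilator.mp h x hx
  simpa using this

lemma adj_of_mul_eq_bot {I J : AnnVert R} (hne : I ≠ J) (h : I.1 * J.1 = ⊥) :
    (annihilatorIdealGraph R).Adj I J := by
  refine ⟨hne, ?_⟩
  rw [h, Submodule.annihilator_bot]
  intro hEq
  have h1 : (1 : R) ∈ ((⊤ : Ideal R) : Set R) := by simp
  rw [hEq] at h1
  rcases h1 with h1 | h1
  · exact one_not_mem_ann I h1
  · exact one_not_mem_ann J h1

lemma mul_ne_bot_of_not_adj {I J : AnnVert R} (hne : I ≠ J)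
    (hnadj : ¬ (annihilatorIdealGraph R).Adj I J) : I.1 * J.1 ≠ ⊥ :=
  fun h => hnadj (adj_of_mul_eq_bot hne h)

lemma ann_comparable_of_not_adj {I J : AnnVert R} (hne : I ≠ J)
    (hnadj : ¬ (annihilatorIdealGraph R).Adj I J) :
    Submodule.annihilator I.1 ≤ Submodule.annihilator J.1 ∨
      Submodule.annihilator J.1 ≤ Submodule.annihilator I.1 := by
  have hEq : ((Submodule.annihilator (I.1 * J.1) : Ideal R) : Set R) =
      ↑(Submodule.annihilator I.1) ∪ ↑(Submodule.annihilator J.1) := by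
    by_contra h
    exact hnadj ⟨hne, h⟩
  by_contra h
  push_neg at h
  obtain ⟨h1, h2⟩ := h
  rw [SetLike.not_le_iff_exists] at h1 h2
  obtain ⟨x, hxI, hxJ⟩ := h1
  obtain ⟨y, hyJ, hyI⟩ := h2
  have hx' : x ∈ Submodule.annihilator (I.1 * J.1) :=
    Submodule.annihilator_mono Ideal.mul_le_left hxI
  have hy' : y ∈ Submodule.annihilator (I.1 * J.1) :=
    Submodule.annihilator_mono Ideal.mul_le_right hyJ
  have hxy : x + y ∈ ((Submodule.annihilator (I.1 * J.1) : Ideal R) : Set R) :=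
    Submodule.add_mem _ hx' hy'
  rw [hEq] at hxy
  rcases hxy with h | h
  · have : y ∈ Submodule.annihilator I.1 := by
      have := Submodule.sub_mem _ h hxI
      simpa using this
    exact hyI this
  · have : x ∈ Submodule.annihilator J.1 := by
      have := Submodule.sub_mem _ h hyJ
      simpa using this
    exact hxJ this

lemma mul_ann_eq_bot (I : Ideal R) : (Submodule.annihilator I : Ideal R) * I = ⊥ := by
  rw [eq_bot_iff, Ideal.mul_le]
  intro r hr s hs
  have := Submodule.mem_annihilator.mp hr s hs
  simpa using this

lemma le_ann_of_mul_eq_bot {I J : Ideal R} (h : I * J = ⊥) :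
    J ≤ Submodule.annihilator I := by
  intro x hx
  rw [Submodule.mem_annihilator]
  intro m hm
  have hmem := Ideal.mul_mem_mul hm hx
  rw [h] at hmem
  have : m * x = 0 := by simpa using hmem
  simpa [mul_comm] using this

/-- The annihilator of a vertex is a vertex. -/
def annVert (I : AnnVert R) : AnnVert R :=
  ⟨Submodule.annihilator I.1, I.2.2, by
    intro hbot
    apply I.2.1
    rw [eq_bot_iff]
    intro x hx
    have hmem : x ∈ Submodule.annihilator (Submodule.annihilator I.1 : Ideal R) := by
      rw [Submodule.mem_annihilator]
      intro y hy
      have := Submodule.mem_annihilator.mp hy x hx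
      simpa [mul_comm] using this
    rw [hbot] at hmem
    exact hmem⟩

lemma common_aux {I J : AnnVert R} (hIJ : I.1 * J.1 ≠ ⊥)
    (hle : Submodule.annihilator I.1 ≤ Submodule.annihilator J.1) :
    ∃ K : AnnVert R, K ≠ I ∧ K ≠ J ∧ K.1 * I.1 = ⊥ ∧ K.1 * J.1 = ⊥ := by
  refine ⟨annVert I, ?_, ?_, mul_ann_eq_bot I.1, ?_⟩
  · intro hKI
    apply hIJ
    have h1 : I.1 = (Submodule.annihilator I.1 : Ideal R) :=
      (congrArg Subtype.val hKI).symm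
    rw [eq_bot_iff, Ideal.mul_le]
    intro r hr s hs
    have hr' : r ∈ Submodule.annihilator J.1 := hle (h1 ▸ hr)
    have := Submodule.mem_annihilator.mp hr' s hs
    simpa using this
  · intro hKJ
    apply hIJ
    have h1 : J.1 = (Submodule.annihilator I.1 : Ideal R) :=
      (congrArg Subtype.val hKJ).symm
    rw [eq_bot_iff, Ideal.mul_le]
    intro r hr s hs
    have hs' : s ∈ Submodule.annihilator I.1 := h1 ▸ hs
    have := Submodule.mem_annihilator.mp hs' r hr
    simpa [mul_comm] using this
  · rw [eq_bot_iff, Ideal.mul_le]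
    intro r hr s hs
    have hr' : r ∈ Submodule.annihilator J.1 := hle hr
    have := Submodule.mem_annihilator.mp hr' s hs
    simpa using this

lemma common {I J : AnnVert R} (hne : I ≠ J)
    (hnadj : ¬ (annihilatorIdealGraph R).Adj I J) :
    ∃ K : AnnVert R, K ≠ I ∧ K ≠ J ∧ K.1 * I.1 = ⊥ ∧ K.1 * J.1 = ⊥ := by
  have hIJ := mul_ne_bot_of_not_adj hne hnadj
  rcases ann_comparable_of_not_adj hne hnadj with hle | hle
  · exact common_aux hIJ hle
  · obtain ⟨K, h1, h2, h3, h4⟩ := common_aux (by rwa [mul_comm]) hle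
    exact ⟨K, h2, h1, h4, h3⟩

end AuxRing

theorem stmt0 (R : Type*) [CommRing R] [Nontrivial R] (hdom : ¬IsDomain R)
    (htwo : ∃ I J : AnnVert R, I ≠ J) :
    (annihilatorIdealGraph R).Connected ∧
    (annihilatorIdealGraph R).ediam ≤ 2 ∧
    ((∃ (v : AnnVert R) (w : (annihilatorIdealGraph R).Walk v v), w.IsCycle) →
      (annihilatorIdealGraph R).egirth ≤ 4) := by
  classical
  -- any two distinct vertices are adjacent or have a common neighbor
  have step : ∀ I J : AnnVert R, I ≠ J → (annihilatorIdealGraph R).Adj I J ∨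
      ∃ K, (annihilatorIdealGraph R).Adj I K ∧ (annihilatorIdealGraph R).Adj K J := by
    intro I J hne
    by_cases h : (annihilatorIdealGraph R).Adj I J
    · exact Or.inl h
    · obtain ⟨K, hKI, hKJ, hK1, hK2⟩ := AuxRing.common hne h
      exact Or.inr ⟨K, (AuxRing.adj_of_mul_eq_bot hKI hK1).symm,
        AuxRing.adj_of_mul_eq_bot hKJ hK2⟩
  have hconn : (annihilatorIdealGraph R).Connected := by
    obtain ⟨I0, J0, -⟩ := htwo
    haveI : Nonempty (AnnVert R) := ⟨I0⟩
    refine ⟨fun u v => ?_⟩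
    by_cases huv : u = v
    · subst huv; exact Reachable.refl u
    · rcases step u v huv with h | ⟨K, h1, h2⟩
      · exact h.reachable
      · exact h1.reachable.trans h2.reachable
  have hdiam : (annihilatorIdealGraph R).ediam ≤ 2 := by
    apply SimpleGraph.ediam_le_of_edist_le
    intro u v
    by_cases huv : u = v
    · subst huv; simp
    · rcases step u v huv with h | ⟨K, h1, h2⟩
      · refine le_trans (SimpleGraph.edist_le (Walk.cons h Walk.nil)) ?_
        simp
      · refine le_trans (SimpleGraph.edist_le (Walk.cons h1 (Walk.cons h2 Walk.nil))) ?_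
        simp
  refine ⟨hconn, hdiam, ?_⟩
  rintro ⟨v, w, hw⟩
  by_contra h4
  -- no triangles, no squares
  have noTri : ∀ a b c : AnnVert R, (annihilatorIdealGraph R).Adj a b →
      (annihilatorIdealGraph R).Adj b c → (annihilatorIdealGraph R).Adj c a → False := by
    intro a b c hab hbc hca
    have h3 := AuxGraph.egirth_le_length (AuxGraph.isCycle_triangle hab hbc hca)
    simp only [Walk.length_cons, Walk.length_nil] at h3
    exact h4 (h3.trans (by norm_num))
  have noQuad : ∀ a b c d : AnnVert R, a ≠ c → b ≠ d →
      (annihilatorIdealGraph R).Adj a b → (annihilatorIdealGraph R).Adj b c →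
      (annihilatorIdealGraph R).Adj c d → (annihilatorIdealGraph R).Adj d a → False := by
    intro a b c d hac hbd hab hbc hcd hda
    have h3 := AuxGraph.egirth_le_length (AuxGraph.isCycle_quad hac hbd hab hbc hcd hda)
    simp only [Walk.length_cons, Walk.length_nil] at h3
    exact h4 (h3.trans (by norm_num))
  -- triple lemma: consecutive edges on a "no short cycle" graph have zero products
  have triple : ∀ a b c : AnnVert R, (annihilatorIdealGraph R).Adj a b →
      (annihilatorIdealGraph R).Adj b c → a ≠ c →
      a.1 * b.1 = ⊥ ∧ b.1 * c.1 = ⊥ := by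
    intro a b c hab hbc hac
    have hnadj : ¬ (annihilatorIdealGraph R).Adj a c := fun h => noTri a b c hab hbc h.symm
    obtain ⟨K, hKa, hKc, hKa0, hKc0⟩ := AuxRing.common hac hnadj
    by_cases hKb : K = b
    · subst hKb
      exact ⟨by rw [mul_comm]; exact hKa0, by
        rw [mul_comm] at hKa0
        -- b*c : from hKc0
        exact hKc0⟩
    · exact absurd (noQuad a b c K hac (Ne.symm hKb) hab hbc
        ((AuxRing.adj_of_mul_eq_bot hKc hKc0).symm) (AuxRing.adj_of_mul_eq_bot hKa hKa0)) not_false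
  -- the cycle has length ≥ 5
  have hn3 : 3 ≤ w.length := hw.three_le_length
  by_cases hn4 : w.length ≤ 4
  · exact h4 ((AuxGraph.egirth_le_length hw).trans (by exact_mod_cast hn4))
  have hn5 : 5 ≤ w.length := by omega
  set n := w.length with hn
  -- vertices along the cycle
  set vv : ℕ → AnnVert R := fun i => w.getVert i with hvv
  have hadj : ∀ i, i < n → (annihilatorIdealGraph R).Adj (vv i) (vv (i + 1)) :=
    fun i h => w.adj_getVert_succ h
  have e0n : vv 0 = vv n := by simp [hvv, hn, Walk.getVert_zero, Walk.getVert_length]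
  have hgv : ∀ i j : ℕ, 1 ≤ i → i < j → j ≤ n → vv i ≠ vv j :=
    fun i j h1 hij hj => AuxGraph.IsCycle.getVert_ne hw h1 hij hj
  have a01 : (annihilatorIdealGraph R).Adj (vv 0) (vv 1) := hadj 0 (by omega)
  have a12 : (annihilatorIdealGraph R).Adj (vv 1) (vv 2) := hadj 1 (by omega)
  have a23 : (annihilatorIdealGraph R).Adj (vv 2) (vv 3) := hadj 2 (by omega)
  have an : (annihilatorIdealGraph R).Adj (vv (n-2)) (vv (n-1)) := by
    have h := hadj (n-2) (by omega)
    have e : n - 2 + 1 = n - 1 := by omega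
    rwa [e] at h
  have an0 : (annihilatorIdealGraph R).Adj (vv (n-1)) (vv 0) := by
    have h := hadj (n-1) (by omega)
    have e : n - 1 + 1 = n := by omega
    rw [e] at h
    rwa [← e0n] at h
  have d02 : vv 0 ≠ vv 2 := by
    rw [e0n]; exact (hgv 2 n (by omega) (by omega) le_rfl).symm
  have d13 : vv 1 ≠ vv 3 := hgv 1 3 (by omega) (by omega) (by omega)
  have dn20 : vv (n-2) ≠ vv 0 := by
    rw [e0n]; exact hgv (n-2) n (by omega) (by omega) le_rfl
  have d2n1 : vv 2 ≠ vv (n-1) := hgv 2 (n-1) (by omega) (by omega) (by omega)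
  have d1n1 : vv 1 ≠ vv (n-1) := hgv 1 (n-1) (by omega) (by omega) (by omega)
  -- consecutive products are zero
  obtain ⟨p01, p12⟩ := triple (vv 0) (vv 1) (vv 2) a01 a12 d02
  obtain ⟨-, p23⟩ := triple (vv 1) (vv 2) (vv 3) a12 a23 d13
  obtain ⟨-, pn0⟩ := triple (vv (n-2)) (vv (n-1)) (vv 0) an an0 dn20
  -- the ideal L = v0 * v2
  have hnadj02 : ¬ (annihilatorIdealGraph R).Adj (vv 0) (vv 2) :=
    fun h => noTri (vv 0) (vv 1) (vv 2) a01 a12 h.symm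
  set L : Ideal R := (vv 0).1 * (vv 2).1 with hL
  have hLbot : L ≠ ⊥ := AuxRing.mul_ne_bot_of_not_adj d02 hnadj02
  have hLV1 : L * (vv 1).1 = ⊥ := by
    rw [hL, mul_right_comm, p01, Submodule.bot_mul]
  have hLV3 : L * (vv 3).1 = ⊥ := by
    rw [hL, mul_assoc, p23, Submodule.mul_bot]
  have hLann : Submodule.annihilator L ≠ ⊥ := by
    intro hb
    apply (vv 1).2.1
    rw [eq_bot_iff]
    exact le_trans (AuxRing.le_ann_of_mul_eq_bot hLV1) (le_of_eq hb)
  set vL : AnnVert R := ⟨L, hLbot, hLann⟩ with hvL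
  by_cases h1 : vL = vv 1
  · have hv : (vv 1).1 = L := (congrArg Subtype.val h1).symm
    have h13 : (vv 1).1 * (vv 3).1 = ⊥ := by rw [hv]; exact hLV3
    exact noTri (vv 1) (vv 2) (vv 3) a12 a23
      (AuxRing.adj_of_mul_eq_bot d13 h13).symm
  by_cases h3 : vL = vv 3
  · have hv : (vv 3).1 = L := (congrArg Subtype.val h3).symm
    have h31 : (vv 3).1 * (vv 1).1 = ⊥ := by rw [hv]; exact hLV1
    exact noTri (vv 1) (vv 2) (vv 3) a12 a23
      (AuxRing.adj_of_mul_eq_bot d13.symm h31)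
  by_cases h2 : vL = vv 2
  · have hv : (vv 2).1 = L := (congrArg Subtype.val h2).symm
    have hsub : (vv 2).1 ≤ (vv 0).1 := by rw [hv, hL]; exact Ideal.mul_le_left
    have p2n1 : (vv 2).1 * (vv (n-1)).1 = ⊥ := by
      rw [eq_bot_iff]
      calc (vv 2).1 * (vv (n-1)).1 ≤ (vv 0).1 * (vv (n-1)).1 :=
            Ideal.mul_mono hsub le_rfl
        _ = ⊥ := by rw [mul_comm]; exact pn0
    exact noQuad (vv (n-1)) (vv 0) (vv 1) (vv 2) d1n1.symm d02 an0 a01 a12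
      (AuxRing.adj_of_mul_eq_bot d2n1 p2n1)
  · have adjL1 : (annihilatorIdealGraph R).Adj (vv 1) vL :=
      (AuxRing.adj_of_mul_eq_bot h1 hLV1).symm
    have adjL3 : (annihilatorIdealGraph R).Adj vL (vv 3) :=
      AuxRing.adj_of_mul_eq_bot h3 hLV3
    exact noQuad (vv 1) vL (vv 3) (vv 2) d13 h2 adjL1 adjL3 a23.symm a12.symm
end

section
/- Let R be a reduced commutative ring with identity which is not an integral domain, and suppose the annihilator-ideal graph A_I(R) is not equal to the annihilating-ideal graph 𝔸𝔾(R). Then the girth of A_I(R) equals 3; moreover, there exists a cycle C of length three in A_I(R) such that no edge of C is an edge of 𝔸𝔾(R). -/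
section Aux

variable {R : Type*} [CommRing R]

lemma ann_union_subset_ann_mul (I J : Ideal R) :
    ((Submodule.annihilator I : Ideal R) : Set R) ∪ ↑(Submodule.annihilator J) ⊆
      ↑(Submodule.annihilator (I * J)) := by
  rintro x (hx | hx) <;> rw [SetLike.mem_coe, Submodule.mem_annihilator] at *
  · intro n hn
    refine Submodule.mul_induction_on hn (fun i hi j hj => ?_) (fun a b ha hb => ?_)
    · rw [smul_eq_mul, ← mul_assoc]
      rw [show x * i = 0 from hx i hi, zero_mul]
    · rw [smul_add, ha, hb, add_zero]
  · intro n hn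
    refine Submodule.mul_induction_on hn (fun i hi j hj => ?_) (fun a b ha hb => ?_)
    · rw [smul_eq_mul, mul_comm i j, ← mul_assoc]
      rw [show x * j = 0 from hx j hj, zero_mul]
    · rw [smul_add, ha, hb, add_zero]

/-- Every edge of the annihilating-ideal graph is an edge of the annihilator-ideal graph. -/
lemma AG_le_AI (I J : AnnVert R) (h : (annihilatingIdealGraph R).Adj I J) :
    (annihilatorIdealGraph R).Adj I J := by
  obtain ⟨hIJ, hmul⟩ := h
  refine ⟨hIJ, fun heq => ?_⟩
  have h1 : (1 : R) ∈ Submodule.annihilator (I.1 * J.1) := by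
    rw [hmul]; simp [Submodule.mem_annihilator]
  rw [← SetLike.mem_coe, heq] at h1
  rcases h1 with h1 | h1
  · apply I.2.1
    rw [SetLike.mem_coe, Submodule.mem_annihilator] at h1
    exact (Submodule.eq_bot_iff _).2 fun i hi => by simpa using h1 i hi
  · apply J.2.1
    rw [SetLike.mem_coe, Submodule.mem_annihilator] at h1
    exact (Submodule.eq_bot_iff _).2 fun j hj => by simpa using h1 j hj

end Aux

theorem stmt1 (R : Type*) [CommRing R] [Nontrivial R] [IsReduced R] (hdom : ¬IsDomain R)
    (hne : annihilatorIdealGraph R ≠ annihilatingIdealGraph R) :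
    (annihilatorIdealGraph R).egirth = 3 ∧
    ∃ a b c : AnnVert R,
      (annihilatorIdealGraph R).Adj a b ∧ (annihilatorIdealGraph R).Adj b c ∧
      (annihilatorIdealGraph R).Adj c a ∧
      ¬ (annihilatingIdealGraph R).Adj a b ∧ ¬ (annihilatingIdealGraph R).Adj b c ∧
      ¬ (annihilatingIdealGraph R).Adj c a := by
  classical
  -- Step 1: find an A_I edge that is not an AG edge.
  have hex : ∃ I J : AnnVert R, (annihilatorIdealGraph R).Adj I J ∧
      ¬ (annihilatingIdealGraph R).Adj I J := by
    by_contra hcon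
    push_neg at hcon
    apply hne
    ext I J
    exact ⟨fun h => hcon I J h, fun h => AG_le_AI I J h⟩
  obtain ⟨I, J, ⟨hIJne, hIJadj⟩, hnAG⟩ := hex
  have hIJbot : I.1 * J.1 ≠ ⊥ := fun h => hnAG ⟨hIJne, h⟩
  -- Step 2: get x annihilating IJ but not I, not J.
  have hx : ∃ x : R, x ∈ Submodule.annihilator (I.1 * J.1) ∧
      x ∉ Submodule.annihilator I.1 ∧ x ∉ Submodule.annihilator J.1 := by
    by_contra hcon
    push_neg at hcon
    apply hIJadj
    apply Set.Subset.antisymm _ (ann_union_subset_ann_mul I.1 J.1)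
    intro x hxx
    rw [SetLike.mem_coe] at hxx
    by_cases h1 : x ∈ Submodule.annihilator I.1
    · exact Or.inl h1
    · exact Or.inr (hcon x hxx h1)
  obtain ⟨x, hxIJ, hxI, hxJ⟩ := hx
  rw [Submodule.mem_annihilator] at hxIJ
  have hx0 : x ≠ 0 := by
    rintro rfl
    exact hxI (Submodule.zero_mem _)
  -- the third vertex: the principal ideal (x)
  set K : Ideal R := Ideal.span {x} with hK
  have hxK : x ∈ K := Ideal.mem_span_singleton_self x
  have hKbot : K ≠ ⊥ := by
    intro h
    exact hx0 (by simpa [h, Ideal.mem_bot] using hxK)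
  -- x * (i*j) = 0 for i ∈ I, j ∈ J
  have hxij : ∀ i ∈ I.1, ∀ j ∈ J.1, x * (i * j) = 0 := fun i hi j hj => by
    simpa [smul_eq_mul] using hxIJ _ (Ideal.mul_mem_mul hi hj)
  -- IJ ≤ Ann(K), so K is a vertex
  have hIJannK : I.1 * J.1 ≤ Submodule.annihilator K := by
    intro a ha
    rw [Submodule.mem_annihilator]
    intro k hk
    rw [hK, Ideal.mem_span_singleton'] at hk
    obtain ⟨c, rfl⟩ := hk
    rw [smul_eq_mul]
    have : x * a = 0 := by simpa [smul_eq_mul] using hxIJ a ha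
    ring_nf
    rw [mul_comm a c, mul_assoc, mul_comm a x, this, mul_zero]
  have hannK : Submodule.annihilator K ≠ ⊥ := fun h =>
    hIJbot (le_bot_iff.mp (hIJannK.trans h.le))
  set c : AnnVert R := ⟨K, hKbot, hannK⟩ with hc
  -- x does not annihilate I means: ∃ i ∈ I, x * i ≠ 0 ; similarly J
  have hxJ' : ∃ j ∈ J.1, x * j ≠ 0 := by
    by_contra hcon
    push_neg at hcon
    exact hxJ (Submodule.mem_annihilator.2 fun j hj => by simpa [smul_eq_mul] using hcon j hj)
  have hxI' : ∃ i ∈ I.1, x * i ≠ 0 := by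
    by_contra hcon
    push_neg at hcon
    exact hxI (Submodule.mem_annihilator.2 fun i hi => by simpa [smul_eq_mul] using hcon i hi)
  -- I ≠ K and J ≠ K (as ideals), using reducedness
  have hIK : I.1 ≠ K := by
    intro h
    apply hxJ
    rw [Submodule.mem_annihilator]
    intro j hj
    have h2 : x * (x * j) = 0 := hxij x (h ▸ hxK) j hj
    have hsq : (x * j) ^ 2 = 0 := by linear_combination j * h2
    have := IsReduced.eq_zero (x * j) ⟨2, hsq⟩
    simpa [smul_eq_mul] using this
  have hJK : J.1 ≠ K := by
    intro h
    apply hxI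
    rw [Submodule.mem_annihilator]
    intro i hi
    have h2 : x * (i * x) = 0 := hxij i hi x (h ▸ hxK)
    have hsq : (x * i) ^ 2 = 0 := by linear_combination i * h2
    have := IsReduced.eq_zero (x * i) ⟨2, hsq⟩
    simpa [smul_eq_mul] using this
  -- products with K are nonzero
  have hIK0 : I.1 * K ≠ ⊥ := by
    intro h
    obtain ⟨i, hi, hxi⟩ := hxI'
    apply hxi
    have : i * x ∈ I.1 * K := Ideal.mul_mem_mul hi hxK
    rw [h, Ideal.mem_bot] at this
    rw [mul_comm]; exact this
  have hJK0 : J.1 * K ≠ ⊥ := by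
    intro h
    obtain ⟨j, hj, hxj⟩ := hxJ'
    apply hxj
    have : j * x ∈ J.1 * K := Ideal.mul_mem_mul hj hxK
    rw [h, Ideal.mem_bot] at this
    rw [mul_comm]; exact this
  -- J ≤ Ann(I*K), and it contains an element outside Ann(I) ∪ Ann(K)
  have hJann : (J.1 : Set R) ⊆ ↑(Submodule.annihilator (I.1 * K)) := by
    intro j hj
    rw [SetLike.mem_coe, Submodule.mem_annihilator]
    intro n hn
    refine Submodule.mul_induction_on hn (fun i hi k hk => ?_) (fun a b ha hb => ?_)
    · rw [hK, Ideal.mem_span_singleton'] at hk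
      obtain ⟨d, rfl⟩ := hk
      have := hxij i hi j hj
      rw [smul_eq_mul]
      calc j * (i * (d * x)) = d * (x * (i * j)) := by ring
        _ = 0 := by rw [this, mul_zero]
    · rw [smul_add, ha, hb, add_zero]
  have hIadjK : (annihilatorIdealGraph R).Adj I c := by
    refine ⟨fun h => hIK (congrArg Subtype.val h), fun heq => ?_⟩
    have hsub : (J.1 : Set R) ⊆ ↑(Submodule.annihilator I.1) ∪ ↑(Submodule.annihilator K) := by
      intro j hj
      have := hJann hj
      rwa [heq] at this
    rcases Ideal.subset_union.mp hsub with h | h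
    · apply hIJbot
      rw [mul_comm]
      apply le_bot_iff.mp
      intro n hn
      refine Submodule.mul_induction_on hn (fun j hj i hi => ?_) (fun a b ha hb => ?_)
      · have := Submodule.mem_annihilator.mp (h hj) i hi
        simpa [smul_eq_mul] using this
      · simpa using add_mem ha hb
    · apply hxJ
      rw [Submodule.mem_annihilator]
      intro j hj
      have := Submodule.mem_annihilator.mp (h hj) x hxK
      rw [smul_eq_mul] at this ⊢
      rw [mul_comm]; exact this
  -- symmetric: I ≤ Ann(J*K)
  have hIann : (I.1 : Set R) ⊆ ↑(Submodule.annihilator (J.1 * K)) := by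
    intro i hi
    rw [SetLike.mem_coe, Submodule.mem_annihilator]
    intro n hn
    refine Submodule.mul_induction_on hn (fun j hj k hk => ?_) (fun a b ha hb => ?_)
    · rw [hK, Ideal.mem_span_singleton'] at hk
      obtain ⟨d, rfl⟩ := hk
      have := hxij i hi j hj
      rw [smul_eq_mul]
      calc i * (j * (d * x)) = d * (x * (i * j)) := by ring
        _ = 0 := by rw [this, mul_zero]
    · rw [smul_add, ha, hb, add_zero]
  have hJadjK : (annihilatorIdealGraph R).Adj J c := by
    refine ⟨fun h => hJK (congrArg Subtype.val h), fun heq => ?_⟩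
    have hsub : (I.1 : Set R) ⊆ ↑(Submodule.annihilator J.1) ∪ ↑(Submodule.annihilator K) := by
      intro i hi
      have := hIann hi
      rwa [heq] at this
    rcases Ideal.subset_union.mp hsub with h | h
    · apply hIJbot
      apply le_bot_iff.mp
      intro n hn
      refine Submodule.mul_induction_on hn (fun i hi j hj => ?_) (fun a b ha hb => ?_)
      · have := Submodule.mem_annihilator.mp (h hi) j hj
        simpa [smul_eq_mul] using this
      · simpa using add_mem ha hb
    · apply hxI
      rw [Submodule.mem_annihilator]
      intro i hi
      have := Submodule.mem_annihilator.mp (h hi) x hxK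
      rw [smul_eq_mul] at this ⊢
      rw [mul_comm]; exact this
  -- assemble the triangle
  have hadjIJ : (annihilatorIdealGraph R).Adj I J := ⟨hIJne, hIJadj⟩
  have hadjcI : (annihilatorIdealGraph R).Adj c I := hIadjK.symm
  have hnAG2 : ¬ (annihilatingIdealGraph R).Adj J c := fun ⟨_, h⟩ => hJK0 h
  have hnAG3 : ¬ (annihilatingIdealGraph R).Adj c I := fun ⟨_, h⟩ => hIK0 (by rwa [mul_comm] at h)
  refine ⟨?_, I, J, c, hadjIJ, hJadjK, hadjcI, hnAG, hnAG2, hnAG3⟩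
  -- egirth = 3
  have htri : ∃ s : Finset (AnnVert R), (annihilatorIdealGraph R).IsNClique 3 s := by
    refine ⟨{I, J, c}, SimpleGraph.is3Clique_triple_iff.2 ⟨hadjIJ, hadjcI.symm, hJadjK⟩⟩
  obtain ⟨u, w, hwc, hwl⟩ :=
    (SimpleGraph.is3Clique_iff_exists_cycle_length_three).mp htri
  refine le_antisymm ?_ SimpleGraph.three_le_egirth
  calc (annihilatorIdealGraph R).egirth ≤ (w.length : ℕ∞) := by
        rw [SimpleGraph.egirth]
        exact iInf_le_of_le u (iInf_le_of_le w (iInf_le_of_le hwc le_rfl))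
    _ = 3 := by rw [hwl]; rfl
end

section
/- Let R be a commutative ring with identity which is not an integral domain, and let I and J be distinct nonzero annihilating ideals of R. If I and J are adjacent in the annihilator-ideal graph A_I(R), then I ∩ Ann_R(J) ≠ (0) and J ∩ Ann_R(I) ≠ (0). Moreover, if R is reduced, then the converse also holds: if I ∩ Ann_R(J) ≠ (0) and J ∩ Ann_R(I) ≠ (0), then I and J are adjacent in A_I(R). -/
theorem stmt4 (R : Type*) [CommRing R] [Nontrivial R] (hdom : ¬IsDomain R)
    (I J : AnnVert R) (hIJ : I ≠ J) :
    ((annihilatorIdealGraph R).Adj I J →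
      I.1 ⊓ Submodule.annihilator J.1 ≠ ⊥ ∧ J.1 ⊓ Submodule.annihilator I.1 ≠ ⊥) ∧
    (IsReduced R →
      (I.1 ⊓ Submodule.annihilator J.1 ≠ ⊥ ∧ J.1 ⊓ Submodule.annihilator I.1 ≠ ⊥) →
      (annihilatorIdealGraph R).Adj I J) := by
  classical
  constructor
  · rintro ⟨-, hne⟩
    -- there is r ∈ Ann(IJ) not in Ann I ∪ Ann J
    have hsub : (↑(Submodule.annihilator I.1) ∪ ↑(Submodule.annihilator J.1) : Set R) ⊆
        ↑(Submodule.annihilator (I.1 * J.1)) := by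
      rintro r (hr | hr)
      · exact Submodule.annihilator_mono Ideal.mul_le_left hr
      · exact Submodule.annihilator_mono Ideal.mul_le_right hr
    obtain ⟨r, hrmem, hrnot⟩ : ∃ r, r ∈ Submodule.annihilator (I.1 * J.1) ∧
        r ∉ (↑(Submodule.annihilator I.1) ∪ ↑(Submodule.annihilator J.1) : Set R) := by
      by_contra h
      push_neg at h
      exact hne (Set.Subset.antisymm h hsub)
    have hrI : r ∉ Submodule.annihilator I.1 := fun h => hrnot (Or.inl h)
    have hrJ : r ∉ Submodule.annihilator J.1 := fun h => hrnot (Or.inr h)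
    obtain ⟨x, hxI, hx⟩ : ∃ x ∈ I.1, r * x ≠ 0 := by
      by_contra h; push_neg at h
      exact hrI (Submodule.mem_annihilator.mpr fun n hn => by
        rw [smul_eq_mul]; exact h n hn)
    obtain ⟨y, hyJ, hy⟩ : ∃ y ∈ J.1, r * y ≠ 0 := by
      by_contra h; push_neg at h
      exact hrJ (Submodule.mem_annihilator.mpr fun n hn => by
        rw [smul_eq_mul]; exact h n hn)
    have hann := Submodule.mem_annihilator.mp hrmem
    constructor
    · refine Submodule.ne_bot_iff _ |>.mpr ⟨r * x, ?_, hx⟩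
      refine Submodule.mem_inf.mpr ⟨Ideal.mul_mem_left _ r hxI, ?_⟩
      refine Submodule.mem_annihilator.mpr fun n hn => ?_
      rw [smul_eq_mul, mul_assoc]
      have : x * n ∈ I.1 * J.1 := Ideal.mul_mem_mul hxI hn
      simpa using hann _ this
    · refine Submodule.ne_bot_iff _ |>.mpr ⟨r * y, ?_, hy⟩
      refine Submodule.mem_inf.mpr ⟨Ideal.mul_mem_left _ r hyJ, ?_⟩
      refine Submodule.mem_annihilator.mpr fun n hn => ?_
      rw [smul_eq_mul, mul_assoc]
      have : y * n ∈ I.1 * J.1 := mul_comm n y ▸ Ideal.mul_mem_mul hn hyJ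
      simpa using hann _ this
  · rintro hred ⟨h1, h2⟩
    obtain ⟨a, haMem, ha⟩ := Submodule.ne_bot_iff _ |>.mp h1
    obtain ⟨b, hbMem, hb⟩ := Submodule.ne_bot_iff _ |>.mp h2
    obtain ⟨haI, haJ⟩ := Submodule.mem_inf.mp haMem
    obtain ⟨hbJ, hbI⟩ := Submodule.mem_inf.mp hbMem
    have hannJ := Submodule.mem_annihilator.mp haJ
    have hannI := Submodule.mem_annihilator.mp hbI
    refine ⟨hIJ, fun h => ?_⟩
    have hmem : a + b ∈ Submodule.annihilator (I.1 * J.1) := by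
      refine Submodule.mem_annihilator.mpr fun n hn => ?_
      rw [smul_eq_mul]
      refine Submodule.smul_induction_on hn (fun x hx y hy => ?_)
        (fun x y hx hy => by rw [mul_add, hx, hy, add_zero])
      have h1 : a * y = 0 := by simpa using hannJ y hy
      have h2 : b * x = 0 := by simpa using hannI x hx
      rw [smul_eq_mul, add_mul, mul_comm x y, ← mul_assoc, h1, zero_mul,
        mul_comm y x, ← mul_assoc, h2, zero_mul, add_zero]
    have : a + b ∈ (↑(Submodule.annihilator I.1) ∪ ↑(Submodule.annihilator J.1) : Set R) := by
      rw [← h]; exact hmem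
    have hba : b * a = 0 := by simpa using hannI a haI
    have hab : a * b = 0 := by simpa using hannJ b hbJ
    have ha2 : a * a ≠ 0 := fun hh => ha (IsNilpotent.eq_zero ⟨2, by rw [pow_two]; exact hh⟩)
    have hb2 : b * b ≠ 0 := fun hh => hb (IsNilpotent.eq_zero ⟨2, by rw [pow_two]; exact hh⟩)
    rcases this with hmemI | hmemJ
    · have := Submodule.mem_annihilator.mp hmemI a haI
      rw [smul_eq_mul, add_mul, hba, add_zero] at this
      exact ha2 this
    · have := Submodule.mem_annihilator.mp hmemJ b hbJ
      rw [smul_eq_mul, add_mul, hab, zero_add] at this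
      exact hb2 this
end

section
/- Let R be a reduced commutative ring with identity which is not an integral domain, and suppose that R has n minimal prime ideals with 3 ≤ n < ∞. Then the annihilator-ideal graph A_I(R) is not equal to the annihilating-ideal graph 𝔸𝔾(R), and the girth of A_I(R) equals 3. -/
section Aux
variable {R : Type*} [CommRing R]

lemma aux_union_eq_univ (A B : Ideal R)
    (h : (↑A ∪ ↑B : Set R) = Set.univ) : A = ⊤ ∨ B = ⊤ := by
  by_cases hAB : A ≤ B
  · right
    rw [Ideal.eq_top_iff_one]
    have : (1 : R) ∈ (↑A ∪ ↑B : Set R) := h ▸ Set.mem_univ 1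
    rcases this with h1 | h1
    · exact hAB h1
    · exact h1
  by_cases hBA : B ≤ A
  · left
    rw [Ideal.eq_top_iff_one]
    have : (1 : R) ∈ (↑A ∪ ↑B : Set R) := h ▸ Set.mem_univ 1
    rcases this with h1 | h1
    · exact h1
    · exact hBA h1
  obtain ⟨a, haA, haB⟩ := Set.not_subset.mp hAB
  obtain ⟨b, hbB, hbA⟩ := Set.not_subset.mp hBA
  have : a + b ∈ (↑A ∪ ↑B : Set R) := h ▸ Set.mem_univ _
  rcases this with h1 | h1
  · exact absurd (by simpa using A.sub_mem h1 haA) hbA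
  · exact absurd (by simpa using B.sub_mem h1 hbB) haB

lemma aux_sq_ne_bot [IsReduced R] {I : Ideal R} (hI : I ≠ ⊥) : I * I ≠ ⊥ := by
  intro h
  obtain ⟨x, hxI, hx⟩ := Submodule.exists_mem_ne_zero_of_ne_bot hI
  have : x * x = 0 := by
    have := Ideal.mul_mem_mul hxI hxI
    rw [h] at this
    simpa using this
  exact hx (IsReduced.eq_zero x ⟨2, by rw [sq]; exact this⟩)

lemma aux_le_ann {I J : Ideal R} (h : I * J = ⊥) : I ≤ Submodule.annihilator J := by
  intro r hr
  rw [Submodule.mem_annihilator]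
  intro n hn
  have : r * n ∈ I * J := Ideal.mul_mem_mul hr hn
  rw [h] at this
  simpa using this

end Aux

lemma aux_egirth_three {V : Type*} {G : SimpleGraph V} {a b c : V}
    (hab : G.Adj a b) (hac : G.Adj a c) (hbc : G.Adj b c) : G.egirth = 3 := by
  classical
  obtain ⟨u, w, hw, hl⟩ := SimpleGraph.is3Clique_iff_exists_cycle_length_three.mp
    ⟨{a, b, c}, SimpleGraph.is3Clique_iff.mpr ⟨a, b, c, hab, hac, hbc, rfl⟩⟩
  refine le_antisymm ?_ SimpleGraph.three_le_egirth
  have h2 : G.egirth ≤ w.length := by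
    rw [SimpleGraph.egirth]
    exact iInf_le_of_le u (iInf_le_of_le w (iInf_le _ hw))
  rw [hl] at h2
  exact_mod_cast h2

theorem stmt7 (R : Type*) [CommRing R] [Nontrivial R] [IsReduced R] (hdom : ¬IsDomain R)
    (hfin : (minimalPrimes R).Finite) (hcard : 3 ≤ (minimalPrimes R).ncard) :
    annihilatorIdealGraph R ≠ annihilatingIdealGraph R ∧
    (annihilatorIdealGraph R).egirth = 3 := by
  classical
  obtain ⟨t, htS, htcard⟩ := Set.exists_subset_card_eq hcard
  obtain ⟨p₁, p₂, p₃, h12, h13, h23, rfl⟩ := Set.ncard_eq_three.mp htcard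
  have hp₁ : p₁ ∈ minimalPrimes R := htS (by simp)
  have hp₂ : p₂ ∈ minimalPrimes R := htS (by simp)
  have hp₃ : p₃ ∈ minimalPrimes R := htS (by simp)
  have hmin : ∀ p ∈ minimalPrimes R, Minimal Ideal.IsPrime p := by
    intro p hp
    rwa [minimalPrimes_eq_minimals] at hp
  have hSbot : sInf (minimalPrimes R) = ⊥ := by
    have h := Ideal.sInf_minimalPrimes (I := (⊥ : Ideal R))
    have h2 : nilradical R = ⊥ := by
      rw [nilradical_eq_zero R]; rfl
    rw [show (⊥ : Ideal R).radical = nilradical R by rw [nilradical, Ideal.zero_eq_bot], h2] at h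
    exact h
  set a : Ideal R → Ideal R := fun p => sInf (minimalPrimes R \ {p}) with ha_def
  -- a p is nonzero
  have ha_ne : ∀ p ∈ minimalPrimes R, a p ≠ ⊥ := by
    intro p hp hbot
    set tf : Finset (Ideal R) := (hfin.subset Set.diff_subset).toFinset with htf
    have hco : (↑tf : Set (Ideal R)) = minimalPrimes R \ {p} := Set.Finite.coe_toFinset _
    have hprod : tf.prod id ≤ p := by
      calc tf.prod id ≤ tf.inf id := Ideal.prod_le_inf
        _ = sInf (minimalPrimes R \ {p}) := by rw [Finset.inf_id_eq_sInf, hco]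
        _ = ⊥ := hbot
        _ ≤ p := bot_le
    obtain ⟨q, hqt, hqp⟩ := ((hmin p hp).1.prod_le).mp hprod
    have hq : q ∈ minimalPrimes R \ {p} := hco ▸ hqt
    have hpq : p ≤ q := (hmin p hp).2 (hmin q hq.1).1 hqp
    exact hq.2 (le_antisymm hqp hpq)
  -- pairwise products vanish
  have hmul : ∀ p ∈ minimalPrimes R, ∀ q ∈ minimalPrimes R, p ≠ q → a p * a q = ⊥ := by
    intro p hp q hq hpq
    refine le_antisymm ?_ bot_le
    rw [← hSbot]
    refine le_sInf fun r hr => ?_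
    by_cases hrp : r = p
    · subst hrp
      refine le_trans Ideal.mul_le_right (sInf_le ?_)
      exact ⟨hp, fun h => hpq (Set.mem_singleton_iff.mp h)⟩
    · exact le_trans Ideal.mul_le_left (sInf_le ⟨hr, hrp⟩)
  -- annihilators of a p are nonzero
  have hann_ne : ∀ p ∈ minimalPrimes R, ∀ q ∈ minimalPrimes R, p ≠ q →
      Submodule.annihilator (a p) ≠ ⊥ := by
    intro p hp q hq hpq hbot
    exact ha_ne q hq (le_bot_iff.mp (hbot ▸ aux_le_ann (hmul q hq p hp hpq.symm)))
  -- the a p are distinct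
  have ha_distinct : ∀ p ∈ minimalPrimes R, ∀ q ∈ minimalPrimes R, p ≠ q → a p ≠ a q := by
    intro p hp q hq hpq heq
    have h := hmul p hp q hq hpq
    rw [← heq] at h
    exact aux_sq_ne_bot (ha_ne p hp) h
  -- vertices of the triangle
  let V₁ : AnnVert R := ⟨a p₁, ha_ne p₁ hp₁, hann_ne p₁ hp₁ p₂ hp₂ h12⟩
  let V₂ : AnnVert R := ⟨a p₂, ha_ne p₂ hp₂, hann_ne p₂ hp₂ p₁ hp₁ h12.symm⟩
  let V₃ : AnnVert R := ⟨a p₃, ha_ne p₃ hp₃, hann_ne p₃ hp₃ p₁ hp₁ h13.symm⟩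
  -- adjacency from zero product
  have adj_of_mul_bot : ∀ (I J : AnnVert R), I.1 ≠ J.1 → I.1 * J.1 = ⊥ →
      (annihilatorIdealGraph R).Adj I J := by
    intro I J hne hm
    refine ⟨fun h => hne (congrArg Subtype.val h), ?_⟩
    intro hset
    rw [hm, Submodule.annihilator_bot] at hset
    have huniv : (↑(Submodule.annihilator I.1) ∪ ↑(Submodule.annihilator J.1) : Set R)
        = Set.univ := by
      rw [← hset]; simp
    rcases aux_union_eq_univ _ _ huniv with h | h
    · exact I.2.1 (Submodule.annihilator_eq_top_iff.mp h)
    · exact J.2.1 (Submodule.annihilator_eq_top_iff.mp h)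
  have hadj12 : (annihilatorIdealGraph R).Adj V₁ V₂ :=
    adj_of_mul_bot V₁ V₂ (ha_distinct p₁ hp₁ p₂ hp₂ h12) (hmul p₁ hp₁ p₂ hp₂ h12)
  have hadj13 : (annihilatorIdealGraph R).Adj V₁ V₃ :=
    adj_of_mul_bot V₁ V₃ (ha_distinct p₁ hp₁ p₃ hp₃ h13) (hmul p₁ hp₁ p₃ hp₃ h13)
  have hadj23 : (annihilatorIdealGraph R).Adj V₂ V₃ :=
    adj_of_mul_bot V₂ V₃ (ha_distinct p₂ hp₂ p₃ hp₃ h23) (hmul p₂ hp₂ p₃ hp₃ h23)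
  refine ⟨?_, aux_egirth_three hadj12 hadj13 hadj23⟩
  -- the graphs differ: exhibit an edge of A_I not in AG
  intro hgraph
  have h12m : a p₁ * a p₂ = ⊥ := hmul p₁ hp₁ p₂ hp₂ h12
  have h13m : a p₁ * a p₃ = ⊥ := hmul p₁ hp₁ p₃ hp₃ h13
  have h23m : a p₂ * a p₃ = ⊥ := hmul p₂ hp₂ p₃ hp₃ h23
  have h21m : a p₂ * a p₁ = ⊥ := hmul p₂ hp₂ p₁ hp₁ h12.symm
  have h31m : a p₃ * a p₁ = ⊥ := hmul p₃ hp₃ p₁ hp₁ h13.symm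
  have h32m : a p₃ * a p₂ = ⊥ := hmul p₃ hp₃ p₂ hp₂ h23.symm
  set I : Ideal R := a p₁ ⊔ a p₂ with hI_def
  set J : Ideal R := a p₂ ⊔ a p₃ with hJ_def
  have hI_ne : I ≠ ⊥ := fun h => ha_ne p₁ hp₁ (le_bot_iff.mp (le_sup_left.trans h.le))
  have hJ_ne : J ≠ ⊥ := fun h => ha_ne p₂ hp₂ (le_bot_iff.mp (le_sup_left.trans h.le))
  have hIann : a p₃ * I = ⊥ := by
    rw [hI_def, Ideal.mul_sup, h31m, h32m, sup_idem]
  have hJann : a p₁ * J = ⊥ := by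
    rw [hJ_def, Ideal.mul_sup, h12m, h13m, sup_idem]
  have hIann_ne : Submodule.annihilator I ≠ ⊥ := fun h =>
    ha_ne p₃ hp₃ (le_bot_iff.mp (h ▸ aux_le_ann hIann))
  have hJann_ne : Submodule.annihilator J ≠ ⊥ := fun h =>
    ha_ne p₁ hp₁ (le_bot_iff.mp (h ▸ aux_le_ann hJann))
  let VI : AnnVert R := ⟨I, hI_ne, hIann_ne⟩
  let VJ : AnnVert R := ⟨J, hJ_ne, hJann_ne⟩
  have hIJ_ne_bot : I * J ≠ ⊥ := by
    intro h
    exact aux_sq_ne_bot (ha_ne p₂ hp₂)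
      (le_bot_iff.mp (h ▸ Ideal.mul_mono le_sup_right le_sup_left))
  have hIJne : I ≠ J := by
    intro h
    have : a p₁ * a p₁ ≤ a p₁ * J := Ideal.mul_mono le_rfl (h ▸ le_sup_left)
    rw [hJann] at this
    exact aux_sq_ne_bot (ha_ne p₁ hp₁) (le_bot_iff.mp this)
  -- pick witnesses
  obtain ⟨x, hx1, hx0⟩ := Submodule.exists_mem_ne_zero_of_ne_bot (ha_ne p₁ hp₁)
  obtain ⟨y, hy3, hy0⟩ := Submodule.exists_mem_ne_zero_of_ne_bot (ha_ne p₃ hp₃)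
  have hIJ_le : I * J ≤ a p₂ := by
    rw [hI_def, hJ_def, Ideal.sup_mul, Ideal.mul_sup, Ideal.mul_sup, h13m]
    refine sup_le (sup_le Ideal.mul_le_right bot_le) (sup_le Ideal.mul_le_right Ideal.mul_le_left)
  have hz_ann : x + y ∈ Submodule.annihilator (I * J) := by
    refine Submodule.annihilator_mono hIJ_le ?_
    exact Submodule.add_mem _ (aux_le_ann h12m hx1) (aux_le_ann h32m hy3)
  have hyx : y * x = 0 := by
    have : y * x ∈ a p₃ * a p₁ := Ideal.mul_mem_mul hy3 hx1
    rw [h31m] at this; simpa using this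
  have hxy : x * y = 0 := by rw [mul_comm]; exact hyx
  have hz_notI : x + y ∉ (↑(Submodule.annihilator I) : Set R) := by
    intro h
    have hx2 : (x + y) * x = 0 := by
      have := Submodule.mem_annihilator.mp h x (le_sup_left (a := a p₁) (b := a p₂) hx1)
      simpa using this
    rw [add_mul, hyx, add_zero] at hx2
    exact hx0 (IsReduced.eq_zero x ⟨2, by rw [sq]; exact hx2⟩)
  have hz_notJ : x + y ∉ (↑(Submodule.annihilator J) : Set R) := by
    intro h
    have hy2 : (x + y) * y = 0 := by
      have := Submodule.mem_annihilator.mp h y (le_sup_right (a := a p₂) (b := a p₃) hy3)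
      simpa using this
    rw [add_mul, hxy, zero_add] at hy2
    exact hy0 (IsReduced.eq_zero y ⟨2, by rw [sq]; exact hy2⟩)
  have hadjIJ : (annihilatorIdealGraph R).Adj VI VJ := by
    refine ⟨fun h => hIJne (congrArg Subtype.val h), ?_⟩
    intro hset
    have hz : x + y ∈ (↑(Submodule.annihilator (I * J)) : Set R) := hz_ann
    rw [hset] at hz
    rcases hz with h | h
    · exact hz_notI h
    · exact hz_notJ h
  rw [hgraph] at hadjIJ
  exact hIJ_ne_bot hadjIJ.2
end

section
/- Let R be a reduced commutative ring with identity which is not an integral domain. Then the annihilator-ideal graph A_I(R) equals the annihilating-ideal graph 𝔸𝔾(R) if and only if A_I(R) and 𝔸𝔾(R) have equal girth and this common girth is either 4 or ∞ (i.e., the graphs either have girth 4 or contain no cycles). -/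
open SimpleGraph

section GraphAux

variable {V' : Type*} {G : SimpleGraph V'}

private lemma egirth_le_cyc {a : V'} {w : G.Walk a a} (hc : w.IsCycle) :
    G.egirth ≤ w.length := by
  rw [SimpleGraph.egirth]
  exact iInf_le_of_le a (iInf_le_of_le w (iInf_le_of_le hc le_rfl))

private lemma egirth_le_three_of {a b c : V'}
    (hab : G.Adj a b) (hbc : G.Adj b c) (hca : G.Adj c a) : G.egirth ≤ 3 := by
  have hne_ac : a ≠ c := hca.ne'
  have hcyc : (Walk.cons hab (Walk.cons hbc (Walk.cons hca Walk.nil))).IsCycle := by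
    simp [Walk.isCycle_def, Walk.isTrail_def, Sym2.eq_iff, hab.ne, hbc.ne, hca.ne, hab.ne',
      hbc.ne', hca.ne', hne_ac]
  simpa using egirth_le_cyc hcyc

private lemma egirth_le_four_of {a b c d : V'}
    (hab : G.Adj a b) (hbc : G.Adj b c) (hcd : G.Adj c d) (hda : G.Adj d a)
    (hac : a ≠ c) (hbd : b ≠ d) : G.egirth ≤ 4 := by
  have hcyc : (Walk.cons hab (Walk.cons hbc (Walk.cons hcd (Walk.cons hda Walk.nil)))).IsCycle := by
    simp [Walk.isCycle_def, Walk.isTrail_def, Sym2.eq_iff, hab.ne, hbc.ne, hcd.ne, hda.ne,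
      hab.ne', hbc.ne', hcd.ne', hda.ne', hac, hbd, hac.symm, hbd.symm]
  simpa using egirth_le_cyc hcyc

private lemma getVert_eq_support_getElem {u v : V'}
    (w : G.Walk u v) {i : ℕ} (hi : i ≤ w.length) :
    w.getVert i = w.support[i]'(by rw [Walk.length_support]; omega) := by
  induction w generalizing i with
  | nil =>
    have : i = 0 := by simpa using hi
    subst this; simp [Walk.getVert]
  | cons h p ih =>
    cases i with
    | zero => simp [Walk.getVert]
    | succ n =>
      rw [Walk.getVert_cons_succ]
      simp only [Walk.support_cons, List.getElem_cons_succ]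
      exact ih (by simpa [Walk.length_cons] using hi)

private lemma getVert_eq_tail_getElem {u v : V'}
    (w : G.Walk u v) {a : ℕ} (ha1 : 1 ≤ a) (ha : a ≤ w.length) :
    w.getVert a = w.support.tail[a-1]'(by
      have := Walk.length_support w
      rw [Walk.support_eq_cons] at this
      simp only [List.length_cons] at this
      omega) := by
  obtain ⟨a', rfl⟩ : ∃ a', a = a' + 1 := ⟨a - 1, by omega⟩
  rw [getVert_eq_support_getElem w ha]
  rw [List.getElem_of_eq (Walk.support_eq_cons w), List.getElem_cons_succ]
  simp

private lemma cycle_getVert_ne {u : V'} {w : G.Walk u u}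
    (hc : w.IsCycle) {i j : ℕ} (hij : i < j) (hj : j ≤ w.length)
    (h0 : ¬(i = 0 ∧ j = w.length)) : w.getVert i ≠ w.getVert j := by
  have hnd : w.support.tail.Nodup := hc.support_nodup
  have key : ∀ {a b : ℕ}, 1 ≤ a → a < b → b ≤ w.length → w.getVert a ≠ w.getVert b := by
    intro a b ha hab hb hEq
    rw [getVert_eq_tail_getElem w ha (le_of_lt (lt_of_lt_of_le hab hb)),
        getVert_eq_tail_getElem w (by omega) hb] at hEq
    have := (hnd.getElem_inj_iff).mp hEq
    omega
  rcases Nat.eq_zero_or_pos i with rfl | hi1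
  · have hjlen : j < w.length := by
      rcases Nat.lt_or_ge j w.length with h | h
      · exact h
      · exact absurd ⟨rfl, le_antisymm hj h⟩ h0
    intro hEq
    have hlast : w.getVert w.length = w.getVert 0 := by
      rw [Walk.getVert_length, Walk.getVert_zero]
    exact key (by omega) hjlen (le_refl _) (by rw [hlast, ← hEq])
  · exact key hi1 hij hj

end GraphAux

section IdealAux

variable {R : Type*} [CommRing R]

private lemma mem_ann_iff {I : Ideal R} {x : R} :
    x ∈ Submodule.annihilator I ↔ ∀ a ∈ I, x * a = 0 := by
  simp [Submodule.mem_annihilator, smul_eq_mul]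

private lemma ideal_mul_eq_bot_iff {I J : Ideal R} :
    I * J = ⊥ ↔ ∀ a ∈ I, ∀ b ∈ J, a * b = 0 := by
  rw [eq_bot_iff, Ideal.mul_le]
  simp [Ideal.mem_bot]

private lemma AG_adj_to_AI {U V : AnnVert R} (h : (annihilatingIdealGraph R).Adj U V) :
    (annihilatorIdealGraph R).Adj U V := by
  obtain ⟨hne, hmul⟩ := h
  refine ⟨hne, ?_⟩
  rw [hmul, Submodule.annihilator_bot]
  intro hset
  have h1 : (1 : R) ∈ ((⊤ : Ideal R) : Set R) := by simp
  rw [hset] at h1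
  rcases h1 with h1 | h1
  · apply U.2.1
    rw [eq_bot_iff]
    intro a ha
    have := mem_ann_iff.mp h1 a ha
    simpa using this
  · apply V.2.1
    rw [eq_bot_iff]
    intro a ha
    have := mem_ann_iff.mp h1 a ha
    simpa using this

variable [IsReduced R]

private lemma sq_ne_bot {I : Ideal R} (hI : I ≠ ⊥) : I * I ≠ ⊥ := by
  obtain ⟨a, haI, ha⟩ := Submodule.ne_bot_iff I |>.mp hI
  intro h
  have h2 : a * a = 0 := ideal_mul_eq_bot_iff.mp h a haI a haI
  exact ha (IsNilpotent.eq_zero ⟨2, by rwa [pow_two]⟩)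

private lemma exists_mul_ne {I : Ideal R} (hI : I ≠ ⊥) :
    ∃ a ∈ I, ∃ b ∈ I, a * b ≠ 0 := by
  by_contra h
  push_neg at h
  exact sq_ne_bot hI (ideal_mul_eq_bot_iff.mpr h)

/-- From a triangle configuration with two equal sums, a contradiction. -/
private lemma no_sums_all_eq {I J K : Ideal R} (hI : I ≠ ⊥)
    (hIJ : I * J = ⊥) (hIK : I * K = ⊥) (h : I + J = J + K) : False := by
  have hij := ideal_mul_eq_bot_iff.mp hIJ
  have hik := ideal_mul_eq_bot_iff.mp hIK
  have hprod : (I + J) * (J + K) ≤ J := by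
    rw [Ideal.mul_le]
    intro r hr s hs
    rw [Submodule.add_eq_sup] at hr hs
    obtain ⟨i, hi, j, hj, rfl⟩ := Submodule.mem_sup.mp hr
    obtain ⟨j', hj', k, hk, rfl⟩ := Submodule.mem_sup.mp hs
    have e1 : i * j' = 0 := hij i hi j' hj'
    have e2 : i * k = 0 := hik i hi k hk
    have : (i + j) * (j' + k) = i * j' + i * k + (j * (j' + k)) := by ring
    rw [this, e1, e2]
    simpa using Ideal.mul_mem_right _ _ hj
  have hII : I * I ≤ J := by
    refine le_trans (Ideal.mul_mono ?_ ?_) hprod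
    · rw [Submodule.add_eq_sup]; exact le_sup_left
    · rw [← h, Submodule.add_eq_sup]; exact le_sup_left
  obtain ⟨a, haI, ha⟩ := Submodule.ne_bot_iff I |>.mp hI
  have haa : a * a ∈ J := hII (Ideal.mul_mem_mul haI haI)
  have h3 : a * (a * a) = 0 := hij a haI _ haa
  exact ha (IsNilpotent.eq_zero ⟨3, by rw [pow_succ, pow_two, mul_assoc]; exact h3⟩)

/-- Key construction: a triangle in `𝔸𝔾(R)` yields an `A_I(R)`-edge that is not an
`𝔸𝔾(R)`-edge, between `C+P` and `C+Q`. -/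
private lemma edge_diff_of_sums {C P Q : Ideal R} (hC : C ≠ ⊥) (hP : P ≠ ⊥) (hQ : Q ≠ ⊥)
    (hCP : C * P = ⊥) (hCQ : C * Q = ⊥) (hPQ : P * Q = ⊥) (hne : C + P ≠ C + Q) :
    ∃ U V : AnnVert R,
      (annihilatorIdealGraph R).Adj U V ∧ ¬ (annihilatingIdealGraph R).Adj U V := by
  have hcp := ideal_mul_eq_bot_iff.mp hCP
  have hcq := ideal_mul_eq_bot_iff.mp hCQ
  have hpq := ideal_mul_eq_bot_iff.mp hPQ
  obtain ⟨q0, hq0, hq0ne⟩ := Submodule.ne_bot_iff Q |>.mp hQ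
  obtain ⟨p0, hp0, hp0ne⟩ := Submodule.ne_bot_iff P |>.mp hP
  have hCleP : C ≤ C + P := by rw [Submodule.add_eq_sup]; exact le_sup_left
  have hCleQ : C ≤ C + Q := by rw [Submodule.add_eq_sup]; exact le_sup_left
  have hPle : P ≤ C + P := by rw [Submodule.add_eq_sup]; exact le_sup_right
  have hQle : Q ≤ C + Q := by rw [Submodule.add_eq_sup]; exact le_sup_right
  -- C+P is a vertex
  have hUbot : C + P ≠ ⊥ := fun hb => hC (le_bot_iff.mp (hb ▸ hCleP))
  have hVbot : C + Q ≠ ⊥ := fun hb => hC (le_bot_iff.mp (hb ▸ hCleQ))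
  have hUann : Submodule.annihilator (C + P) ≠ ⊥ := by
    rw [Submodule.ne_bot_iff]
    refine ⟨q0, mem_ann_iff.mpr ?_, hq0ne⟩
    intro m hm
    rw [Submodule.add_eq_sup] at hm
    obtain ⟨c, hc, p, hp, rfl⟩ := Submodule.mem_sup.mp hm
    have e1 : c * q0 = 0 := hcq c hc q0 hq0
    have e2 : p * q0 = 0 := hpq p hp q0 hq0
    calc q0 * (c + p) = c * q0 + p * q0 := by ring
    _ = 0 := by rw [e1, e2, add_zero]
  have hVann : Submodule.annihilator (C + Q) ≠ ⊥ := by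
    rw [Submodule.ne_bot_iff]
    refine ⟨p0, mem_ann_iff.mpr ?_, hp0ne⟩
    intro m hm
    rw [Submodule.add_eq_sup] at hm
    obtain ⟨c, hc, q, hq, rfl⟩ := Submodule.mem_sup.mp hm
    have e1 : c * p0 = 0 := hcp c hc p0 hp0
    have e2 : p0 * q = 0 := hpq p0 hp0 q hq
    calc p0 * (c + q) = c * p0 + p0 * q := by ring
    _ = 0 := by rw [e1, e2, add_zero]
  refine ⟨⟨C + P, hUbot, hUann⟩, ⟨C + Q, hVbot, hVann⟩, ?_, ?_⟩
  · -- A_I adjacency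
    obtain ⟨p1, hp1, p2, hp2, hpp⟩ := exists_mul_ne hP
    obtain ⟨q1, hq1, q2, hq2, hqq⟩ := exists_mul_ne hQ
    refine ⟨fun hEq => hne (congrArg Subtype.val hEq), ?_⟩
    -- the product is contained in C
    have hprodC : (C + P) * (C + Q) ≤ C := by
      rw [Ideal.mul_le]
      intro r hr s hs
      rw [Submodule.add_eq_sup] at hr hs
      obtain ⟨c, hc, p, hp, rfl⟩ := Submodule.mem_sup.mp hr
      obtain ⟨c', hc', q, hq, rfl⟩ := Submodule.mem_sup.mp hs
      have e1 : p * q = 0 := hpq p hp q hq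
      have : (c + p) * (c' + q) = c * (c' + q) + c' * p + p * q := by ring
      rw [this, e1, add_zero]
      exact Ideal.add_mem _ (Ideal.mul_mem_right _ _ hc) (Ideal.mul_mem_right _ _ hc')
    intro hset
    -- the witness x = p1 + q1
    have hxmem : p1 + q1 ∈ Submodule.annihilator ((C + P) * (C + Q)) := by
      refine mem_ann_iff.mpr fun m hm => ?_
      have hmC : m ∈ C := hprodC hm
      have e1 : m * p1 = 0 := hcp m hmC p1 hp1
      have e2 : m * q1 = 0 := hcq m hmC q1 hq1
      calc (p1 + q1) * m = m * p1 + m * q1 := by ring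
      _ = 0 := by rw [e1, e2, add_zero]
    have hxmem' : (p1 + q1) ∈ (↑(Submodule.annihilator ((C + P) * (C + Q))) : Set R) := hxmem
    rw [hset] at hxmem'
    rcases hxmem' with hx | hx
    · have := mem_ann_iff.mp hx p2 (hPle hp2)
      have e : q1 * p2 = 0 := by
        have h' := hpq p2 hp2 q1 hq1
        calc q1 * p2 = p2 * q1 := by ring
        _ = 0 := h'
      apply hpp
      calc p1 * p2 = (p1 + q1) * p2 - q1 * p2 := by ring
      _ = 0 - 0 := by rw [this, e]
      _ = 0 := by ring
    · have := mem_ann_iff.mp hx q2 (hQle hq2)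
      have e : p1 * q2 = 0 := hpq p1 hp1 q2 hq2
      apply hqq
      calc q1 * q2 = (p1 + q1) * q2 - p1 * q2 := by ring
      _ = 0 - 0 := by rw [this, e]
      _ = 0 := by ring
  · -- not an AG edge
    rintro ⟨-, hbot⟩
    exact sq_ne_bot hC (le_bot_iff.mp (hbot ▸ Ideal.mul_mono hCleP hCleQ))

/-- If the graphs are equal, `𝔸𝔾(R)` has no triangle. -/
private lemma no_AG_triangle (h : annihilatorIdealGraph R = annihilatingIdealGraph R)
    {X Y Z : AnnVert R} (hXY : (annihilatingIdealGraph R).Adj X Y)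
    (hYZ : (annihilatingIdealGraph R).Adj Y Z)
    (hXZ : (annihilatingIdealGraph R).Adj X Z) : False := by
  obtain ⟨I, hI, hIann⟩ := X
  obtain ⟨J, hJ, hJann⟩ := Y
  obtain ⟨K, hK, hKann⟩ := Z
  have hIJ : I * J = ⊥ := hXY.2
  have hJK : J * K = ⊥ := hYZ.2
  have hIK : I * K = ⊥ := hXZ.2
  by_cases h1 : I + J = J + K
  · exact no_sums_all_eq hI hIJ hIK h1
  by_cases h2 : I + J = I + K
  · obtain ⟨U, V, hAI, hAGn⟩ :=
      edge_diff_of_sums hJ hI hK (by rwa [mul_comm]) hJK hIK (by rwa [add_comm J I])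
    rw [h] at hAI
    exact hAGn hAI
  · obtain ⟨U, V, hAI, hAGn⟩ := edge_diff_of_sums hI hJ hK hIJ hIK hJK h2
    rw [h] at hAI
    exact hAGn hAI

/-- Key construction for the backward direction: an `A_I`-edge with nonzero product
yields a triangle in `𝔸𝔾(R)`. -/
private lemma exists_AG_triangle {U V : AnnVert R}
    (hadj : (annihilatorIdealGraph R).Adj U V) (hprod : U.1 * V.1 ≠ ⊥) :
    ∃ X Y Z : AnnVert R, (annihilatingIdealGraph R).Adj X Y ∧
      (annihilatingIdealGraph R).Adj Y Z ∧ (annihilatingIdealGraph R).Adj X Z := by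
  obtain ⟨hne, hset⟩ := hadj
  -- union is contained in the annihilator of the product
  have hsub : (↑(Submodule.annihilator U.1) ∪ ↑(Submodule.annihilator V.1) : Set R) ⊆
      ↑(Submodule.annihilator (U.1 * V.1)) := by
    rintro y (hy | hy) <;> refine SetLike.mem_coe.mpr (mem_ann_iff.mpr fun m hm => ?_)
    · exact mem_ann_iff.mp hy m (Ideal.mul_le_left hm)
    · exact mem_ann_iff.mp hy m (Ideal.mul_le_right hm)
  have hnsub : ¬ ((↑(Submodule.annihilator (U.1 * V.1)) : Set R) ⊆
      (↑(Submodule.annihilator U.1) ∪ ↑(Submodule.annihilator V.1))) :=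
    fun hh => hset (Set.Subset.antisymm hh hsub)
  obtain ⟨x, hx, hxu⟩ := Set.not_subset.mp hnsub
  have hx' : ∀ m ∈ U.1 * V.1, x * m = 0 := mem_ann_iff.mp hx
  have hxU : x ∉ Submodule.annihilator U.1 := fun hh => hxu (Or.inl hh)
  have hxV : x ∉ Submodule.annihilator V.1 := fun hh => hxu (Or.inr hh)
  obtain ⟨a0, ha0, ha0ne⟩ : ∃ a ∈ U.1, x * a ≠ 0 := by
    by_contra hh; push_neg at hh; exact hxU (mem_ann_iff.mpr hh)
  obtain ⟨b0, hb0, hb0ne⟩ : ∃ b ∈ V.1, x * b ≠ 0 := by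
    by_contra hh; push_neg at hh; exact hxV (mem_ann_iff.mpr hh)
  -- the three ideals
  set A : Ideal R := Submodule.map (LinearMap.lsmul R R x) U.1 with hA
  set B : Ideal R := Submodule.map (LinearMap.lsmul R R x) V.1 with hB
  set K : Ideal R := U.1 * V.1 with hKdef
  have hmemA : ∀ {r : R}, r ∈ A → ∃ a ∈ U.1, x * a = r := by
    intro r hr
    obtain ⟨a, ha, e⟩ := Submodule.mem_map.mp hr
    exact ⟨a, ha, by simpa [smul_eq_mul] using e⟩
  have hmemB : ∀ {r : R}, r ∈ B → ∃ b ∈ V.1, x * b = r := by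
    intro r hr
    obtain ⟨b, hb, e⟩ := Submodule.mem_map.mp hr
    exact ⟨b, hb, by simpa [smul_eq_mul] using e⟩
  have hAbot : A ≠ ⊥ := by
    rw [Submodule.ne_bot_iff]
    exact ⟨x * a0, Submodule.mem_map.mpr ⟨a0, ha0, by simp [smul_eq_mul]⟩, ha0ne⟩
  have hBbot : B ≠ ⊥ := by
    rw [Submodule.ne_bot_iff]
    exact ⟨x * b0, Submodule.mem_map.mpr ⟨b0, hb0, by simp [smul_eq_mul]⟩, hb0ne⟩
  have hKbot : K ≠ ⊥ := hprod
  have hAann : Submodule.annihilator A ≠ ⊥ := by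
    obtain ⟨b1, hb1, hb1ne⟩ := Submodule.ne_bot_iff V.1 |>.mp V.2.1
    rw [Submodule.ne_bot_iff]
    refine ⟨b1, mem_ann_iff.mpr fun r hr => ?_, hb1ne⟩
    obtain ⟨a, ha, rfl⟩ := hmemA hr
    have e : x * (a * b1) = 0 := hx' _ (Ideal.mul_mem_mul ha hb1)
    calc b1 * (x * a) = x * (a * b1) := by ring
    _ = 0 := e
  have hBann : Submodule.annihilator B ≠ ⊥ := by
    obtain ⟨a1, ha1, ha1ne⟩ := Submodule.ne_bot_iff U.1 |>.mp U.2.1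
    rw [Submodule.ne_bot_iff]
    refine ⟨a1, mem_ann_iff.mpr fun r hr => ?_, ha1ne⟩
    obtain ⟨b, hb, rfl⟩ := hmemB hr
    have e : x * (a1 * b) = 0 := hx' _ (Ideal.mul_mem_mul ha1 hb)
    calc a1 * (x * b) = x * (a1 * b) := by ring
    _ = 0 := e
  have hxne : x ≠ 0 := fun hh => hxU (by rw [hh]; exact Submodule.zero_mem _)
  have hKann : Submodule.annihilator K ≠ ⊥ := by
    rw [Submodule.ne_bot_iff]
    exact ⟨x, hx, hxne⟩
  -- the products vanish
  have hAB : A * B = ⊥ := by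
    rw [ideal_mul_eq_bot_iff]
    intro r hr s hs
    obtain ⟨a, ha, rfl⟩ := hmemA hr
    obtain ⟨b, hb, rfl⟩ := hmemB hs
    have e : x * (a * b) = 0 := hx' _ (Ideal.mul_mem_mul ha hb)
    calc (x * a) * (x * b) = (x * (a * b)) * x := by ring
    _ = 0 := by rw [e, zero_mul]
  have hAK : A * K = ⊥ := by
    rw [ideal_mul_eq_bot_iff]
    intro r hr m hm
    obtain ⟨a, ha, rfl⟩ := hmemA hr
    have e : x * m = 0 := hx' m hm
    calc (x * a) * m = (x * m) * a := by ring
    _ = 0 := by rw [e, zero_mul]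
  have hBK : B * K = ⊥ := by
    rw [ideal_mul_eq_bot_iff]
    intro r hr m hm
    obtain ⟨b, hb, rfl⟩ := hmemB hr
    have e : x * m = 0 := hx' m hm
    calc (x * b) * m = (x * m) * b := by ring
    _ = 0 := by rw [e, zero_mul]
  -- distinctness
  have hABne : A ≠ B := fun hh => sq_ne_bot hAbot (by rw [← hAB, hh])
  have hAKne : A ≠ K := fun hh => sq_ne_bot hKbot (by rw [← hAK, hh])
  have hBKne : B ≠ K := fun hh => sq_ne_bot hKbot (by rw [← hBK, hh])
  refine ⟨⟨A, hAbot, hAann⟩, ⟨B, hBbot, hBann⟩, ⟨K, hKbot, hKann⟩, ?_, ?_, ?_⟩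
  · exact ⟨fun hh => hABne (congrArg Subtype.val hh), hAB⟩
  · exact ⟨fun hh => hBKne (congrArg Subtype.val hh), hBK⟩
  · exact ⟨fun hh => hAKne (congrArg Subtype.val hh), hAK⟩

end IdealAux

theorem stmt11 (R : Type*) [CommRing R] [Nontrivial R] [IsReduced R] (hdom : ¬IsDomain R) :
    annihilatorIdealGraph R = annihilatingIdealGraph R ↔
      ((annihilatorIdealGraph R).egirth = (annihilatingIdealGraph R).egirth ∧
        ((annihilatorIdealGraph R).egirth = 4 ∨ (annihilatorIdealGraph R).egirth = ⊤)) := by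
  constructor
  · intro h
    refine ⟨by rw [h], ?_⟩
    rw [h]
    set G := annihilatingIdealGraph R with hG
    rcases eq_or_ne G.egirth ⊤ with ht | ht
    · exact Or.inr ht
    left
    have hnac : ¬ G.IsAcyclic := fun ha => ht (SimpleGraph.egirth_eq_top.mpr ha)
    obtain ⟨a, w, hcyc, hlen⟩ := SimpleGraph.exists_egirth_eq_length.mpr hnac
    have h3 := hcyc.three_le_length
    rcases lt_or_ge w.length 5 with h5 | h5
    · have h34 : w.length = 3 ∨ w.length = 4 := by omega
      rcases h34 with h34 | h34
      · exfalso
        have ha01 : G.Adj (w.getVert 0) (w.getVert 1) := w.adj_getVert_succ (by omega)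
        have ha12 : G.Adj (w.getVert 1) (w.getVert 2) := w.adj_getVert_succ (by omega)
        have ha23 : G.Adj (w.getVert 2) (w.getVert 3) := w.adj_getVert_succ (by omega)
        have e3 : w.getVert 3 = w.getVert 0 := by
          rw [show (3:ℕ) = w.length from h34.symm, Walk.getVert_length, Walk.getVert_zero]
        rw [e3] at ha23
        exact no_AG_triangle h ha01 ha12 ha23.symm
      · rw [hlen, h34]; norm_cast
    · exfalso
      -- five consecutive distinct vertices on the cycle
      have hadj : ∀ i, i < w.length → G.Adj (w.getVert i) (w.getVert (i+1)) :=
        fun i hi => w.adj_getVert_succ hi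
      have hvne : ∀ i j, i < j → j ≤ 4 → w.getVert i ≠ w.getVert j := by
        intro i j hij hj4
        exact cycle_getVert_ne hcyc hij (by omega) (by omega)
      have h01 : (w.getVert 0).1 * (w.getVert 1).1 = ⊥ := (hadj 0 (by omega)).2
      have h12 : (w.getVert 1).1 * (w.getVert 2).1 = ⊥ := (hadj 1 (by omega)).2
      have h23 : (w.getVert 2).1 * (w.getVert 3).1 = ⊥ := (hadj 2 (by omega)).2
      have h34 : (w.getVert 3).1 * (w.getVert 4).1 = ⊥ := (hadj 3 (by omega)).2
      -- non-adjacency consequences of triangle-freeness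
      have h02 : (w.getVert 0).1 * (w.getVert 2).1 ≠ ⊥ := fun hb =>
        no_AG_triangle h (hadj 0 (by omega)) (hadj 1 (by omega))
          ⟨hvne 0 2 (by omega) (by omega), hb⟩
      have h13 : (w.getVert 1).1 * (w.getVert 3).1 ≠ ⊥ := fun hb =>
        no_AG_triangle h (hadj 1 (by omega)) (hadj 2 (by omega))
          ⟨hvne 1 3 (by omega) (by omega), hb⟩
      have h24 : (w.getVert 2).1 * (w.getVert 4).1 ≠ ⊥ := fun hb =>
        no_AG_triangle h (hadj 2 (by omega)) (hadj 3 (by omega))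
          ⟨hvne 2 4 (by omega) (by omega), hb⟩
      have hfin : G.egirth ≤ 4 → False := by
        intro hle
        rw [hlen] at hle
        have : w.length ≤ 4 := by exact_mod_cast hle
        omega
      by_cases hc : (w.getVert 0).1 * (w.getVert 3).1 = ⊥
      · -- 4-cycle v0 v1 v2 v3
        refine hfin (egirth_le_four_of (hadj 0 (by omega)) (hadj 1 (by omega))
          (hadj 2 (by omega)) ⟨(hvne 0 3 (by omega) (by omega)).symm, by rwa [mul_comm]⟩
          (hvne 0 2 (by omega) (by omega)) (hvne 1 3 (by omega) (by omega)))
      · -- K = I1 * I3 gives a 4-cycle K v2 v3 v4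
        set I0 := (w.getVert 0).1
        set I1 := (w.getVert 1).1
        set I2 := (w.getVert 2).1
        set I3 := (w.getVert 3).1
        set I4 := (w.getVert 4).1
        have hI0K : I0 * (I1 * I3) = ⊥ := by
          calc I0 * (I1 * I3) = (I0 * I1) * I3 := by ring
          _ = ⊥ * I3 := by rw [h01]
          _ = ⊥ := by simp
        have hI2K : I2 * (I1 * I3) = ⊥ := by
          calc I2 * (I1 * I3) = (I1 * I2) * I3 := by ring
          _ = ⊥ * I3 := by rw [h12]
          _ = ⊥ := by simp
        have hI4K : I4 * (I1 * I3) = ⊥ := by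
          calc I4 * (I1 * I3) = I1 * (I3 * I4) := by ring
          _ = I1 * ⊥ := by rw [h34]
          _ = ⊥ := by simp
        have hKann : Submodule.annihilator (I1 * I3) ≠ ⊥ := by
          obtain ⟨c0, hc0, hc0ne⟩ := Submodule.ne_bot_iff I2 |>.mp (w.getVert 2).2.1
          rw [Submodule.ne_bot_iff]
          refine ⟨c0, mem_ann_iff.mpr fun m hm => ?_, hc0ne⟩
          have : c0 * m ∈ I2 * (I1 * I3) := Ideal.mul_mem_mul hc0 hm
          rw [hI2K] at this
          simpa using this
        set XK : AnnVert R := ⟨I1 * I3, h13, hKann⟩ with hXK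
        have hneK2 : XK ≠ w.getVert 2 := by
          intro hh
          apply h02
          have : I2 = I1 * I3 := (congrArg Subtype.val hh).symm
          rw [this, hI0K]
        have hneK3 : XK ≠ w.getVert 3 := by
          intro hh
          apply hc
          have : I3 = I1 * I3 := (congrArg Subtype.val hh).symm
          rw [this, hI0K]
        have hneK4 : XK ≠ w.getVert 4 := by
          intro hh
          apply h24
          have : I4 = I1 * I3 := (congrArg Subtype.val hh).symm
          rw [this, hI2K]
        refine hfin (egirth_le_four_of (G := G) (a := XK) (b := w.getVert 2)
          (c := w.getVert 3) (d := w.getVert 4)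
          ⟨hneK2, by rw [mul_comm] at hI2K; exact hI2K⟩
          (hadj 2 (by omega)) (hadj 3 (by omega))
          ⟨hneK4.symm, hI4K⟩ hneK3 (hvne 2 4 (by omega) (by omega)))
  · rintro ⟨hgirth, h4⟩
    by_contra hne
    have hdiff : ∃ U V : AnnVert R,
        (annihilatorIdealGraph R).Adj U V ∧ ¬ (annihilatingIdealGraph R).Adj U V := by
      by_contra hAll
      push_neg at hAll
      apply hne
      ext U V
      exact ⟨fun hh => hAll U V hh, fun hh => AG_adj_to_AI hh⟩
    obtain ⟨U, V, hAI, hAGn⟩ := hdiff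
    have hprod : U.1 * V.1 ≠ ⊥ := fun hb => hAGn ⟨hAI.1, hb⟩
    obtain ⟨X, Y, Z, hXY, hYZ, hXZ⟩ := exists_AG_triangle hAI hprod
    have le3 : (annihilatorIdealGraph R).egirth ≤ 3 :=
      egirth_le_three_of (AG_adj_to_AI hXY) (AG_adj_to_AI hYZ) (AG_adj_to_AI hXZ).symm
    rcases h4 with h4 | h4
    · rw [h4] at le3
      norm_num at le3
    · rw [h4] at le3
      exact absurd (top_le_iff.mp le3).symm (by norm_num)
end

section
/- Let R be a non-reduced commutative ring with identity which is not an integral domain, and suppose that the set Z(R) of zero-divisors of R is not an ideal of R. Then the annihilator-ideal graph A_I(R) is not equal to the annihilating-ideal graph 𝔸𝔾(R). -/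
private lemma exists_sq_zero' {R : Type*} [CommRing R] [Nontrivial R] {x : R} (n : ℕ)
    (h : x ^ n = 0) (hx : x ≠ 0) : ∃ a : R, a ≠ 0 ∧ a * a = 0 := by
  induction n with
  | zero => simp at h
  | succ n ih =>
    by_cases h0 : x ^ n = 0
    · exact ih h0
    · rcases Nat.eq_zero_or_pos n with rfl | hn
      · simp at h; exact absurd h hx
      · refine ⟨x ^ n, h0, ?_⟩
        rw [← pow_add]
        exact pow_eq_zero_of_le (by omega) h

private lemma mem_ann_span' {R : Type*} [CommRing R] {x r : R} :
    r ∈ Submodule.annihilator (Ideal.span {x}) ↔ x * r = 0 := by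
  rw [show Ideal.span {x} = Submodule.span R {x} from rfl,
    Submodule.mem_annihilator_span_singleton, smul_eq_mul, mul_comm]

private lemma key' {R : Type*} [CommRing R] {x y : R}
    (hu : ∃ u, u ≠ 0 ∧ x * u = 0) (hv : ∃ v, v ≠ 0 ∧ y * v = 0)
    (hreg : ∀ v : R, (x + y) * v = 0 → v = 0) (hxy : x * y ≠ 0) :
    annihilatorIdealGraph R ≠ annihilatingIdealGraph R := by
  obtain ⟨u, hu0, hxu⟩ := hu
  obtain ⟨v, hv0, hyv⟩ := hv
  have hx0 : x ≠ 0 := left_ne_zero_of_mul hxy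
  have hy0 : y ≠ 0 := right_ne_zero_of_mul hxy
  set I : Ideal R := Ideal.span {x} with hI
  set J : Ideal R := Ideal.span {y} with hJ
  have hIb : I ≠ ⊥ := by simpa [hI, Ideal.span_singleton_eq_bot] using hx0
  have hJb : J ≠ ⊥ := by simpa [hJ, Ideal.span_singleton_eq_bot] using hy0
  have hIu : u ∈ Submodule.annihilator I := mem_ann_span'.mpr hxu
  have hJv : v ∈ Submodule.annihilator J := mem_ann_span'.mpr hyv
  have hIann : Submodule.annihilator I ≠ ⊥ :=
    Submodule.ne_bot_iff _ |>.mpr ⟨u, hIu, hu0⟩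
  have hJann : Submodule.annihilator J ≠ ⊥ :=
    Submodule.ne_bot_iff _ |>.mpr ⟨v, hJv, hv0⟩
  set vI : AnnVert R := ⟨I, hIb, hIann⟩
  set vJ : AnnVert R := ⟨J, hJb, hJann⟩
  have hne : vI ≠ vJ := by
    intro h
    have hIJ : I = J := congrArg Subtype.val h
    have hyi : y ∈ I := by rw [hIJ]; exact Ideal.mem_span_singleton_self y
    obtain ⟨c, hc⟩ := Ideal.mem_span_singleton'.mp hyi
    have : (x + y) * u = 0 := by
      rw [← hc]
      calc (x + c * x) * u = (1 + c) * (x * u) := by ring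
        _ = 0 := by rw [hxu, mul_zero]
    exact hu0 (hreg u this)
  have hprod : I * J = Ideal.span {x * y} := Ideal.span_singleton_mul_span_singleton x y
  have hadjA : (annihilatorIdealGraph R).Adj vI vJ := by
    refine ⟨hne, ?_⟩
    intro heq
    have huU : u ∈ ((Submodule.annihilator (vI.1 * vJ.1) : Ideal R) : Set R) := by
      rw [heq]; exact Or.inl hIu
    have hvU : v ∈ ((Submodule.annihilator (vI.1 * vJ.1) : Ideal R) : Set R) := by
      rw [heq]; exact Or.inr hJv
    have hsum : u + v ∈ ((Submodule.annihilator (vI.1 * vJ.1) : Ideal R) : Set R) :=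
      add_mem huU hvU
    rw [heq] at hsum
    rcases hsum with h1 | h2
    · have h1' : x * (u + v) = 0 := mem_ann_span'.mp h1
      have hxv : x * v = 0 := by
        have : x * u + x * v = 0 := by rw [← mul_add]; exact h1'
        rwa [hxu, zero_add] at this
      have : (x + y) * v = 0 := by rw [add_mul, hxv, hyv, add_zero]
      exact hv0 (hreg v this)
    · have h2' : y * (u + v) = 0 := mem_ann_span'.mp h2
      have hyu : y * u = 0 := by
        have : y * u + y * v = 0 := by rw [← mul_add]; exact h2'
        rwa [hyv, add_zero] at this
      have : (x + y) * u = 0 := by rw [add_mul, hxu, hyu, add_zero]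
      exact hu0 (hreg u this)
  have hnadj : ¬ (annihilatingIdealGraph R).Adj vI vJ := by
    rintro ⟨-, hbot⟩
    have : Ideal.span {x * y} = ⊥ := by rw [← hprod]; exact hbot
    exact hxy (Ideal.span_singleton_eq_bot.mp this)
  intro h
  rw [h] at hadjA
  exact hnadj hadjA

private lemma reg_add_nil' {R : Type*} [CommRing R] {s a : R} (ha : a * a = 0)
    (hreg : ∀ v : R, s * v = 0 → v = 0) : ∀ v : R, (s + a) * v = 0 → v = 0 := by
  intro v h
  have hav : s * (a * v) = 0 := by
    have h2 : (s + a) * v * a = 0 := by rw [h, zero_mul]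
    calc s * (a * v) = (s + a) * v * a - (a * a) * v := by ring
      _ = 0 := by rw [h2, ha]; ring
  have hav0 : a * v = 0 := hreg _ hav
  have hsv : s * v = 0 := by
    have : s * v + a * v = 0 := by rw [← add_mul]; exact h
    rwa [hav0, add_zero] at this
  exact hreg _ hsv

theorem stmt12 (R : Type*) [CommRing R] [Nontrivial R] (hdom : ¬IsDomain R)
    (hnred : ¬IsReduced R)
    (hZ : ¬ ∃ I : Ideal R, (I : Set R) = {x : R | ∃ y : R, y ≠ 0 ∧ x * y = 0}) :
    annihilatorIdealGraph R ≠ annihilatingIdealGraph R := by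
  set ZS : Set R := {x : R | ∃ y : R, y ≠ 0 ∧ x * y = 0} with hZS
  -- a square-zero nonzero element
  obtain ⟨b, ⟨n, hbn⟩, hb0⟩ : ∃ b : R, IsNilpotent b ∧ b ≠ 0 := by
    rw [isReduced_iff] at hnred
    push_neg at hnred
    exact hnred
  obtain ⟨a, ha0, haa⟩ := exists_sq_zero' n hbn hb0
  -- two zero-divisors whose sum is regular
  obtain ⟨x, hx, y, hy, hns⟩ : ∃ x ∈ ZS, ∃ y ∈ ZS, x + y ∉ ZS := by
    by_contra hno
    push_neg at hno
    refine hZ ⟨{ carrier := ZS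
                 add_mem' := fun hx hy => hno _ hx _ hy
                 zero_mem' := ⟨1, one_ne_zero, zero_mul 1⟩
                 smul_mem' := ?_ }, rfl⟩
    rintro c z ⟨v, hv0, hzv⟩
    exact ⟨v, hv0, by rw [smul_eq_mul, mul_assoc, hzv, mul_zero]⟩
  have hreg : ∀ v : R, (x + y) * v = 0 → v = 0 := by
    intro v hv
    by_contra hv0
    exact hns ⟨v, hv0, hv⟩
  have hx0 : x ≠ 0 := by
    rintro rfl
    exact hns (by simpa using hy)
  have hy0 : y ≠ 0 := by
    rintro rfl
    exact hns (by simpa using hx)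
  by_cases hxy : x * y = 0
  · -- use the nilpotent to perturb one side
    by_cases hax : a * x = 0
    · have hay : a * y ≠ 0 := by
        intro hay
        apply ha0
        refine hreg a ?_
        rw [add_mul, mul_comm x a, mul_comm y a, hax, hay, add_zero]
      refine key' (x := y) (y := x + a) ⟨x, hx0, by rw [mul_comm]; exact hxy⟩
        ⟨a * y, hay, ?_⟩ ?_ ?_
      · calc (x + a) * (a * y) = (a * x) * y + (a * a) * y := by ring
          _ = 0 := by rw [hax, haa]; ring
      · intro v hv
        refine reg_add_nil' haa hreg v ?_
        calc (x + y + a) * v = (y + (x + a)) * v := by ring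
          _ = 0 := hv
      · intro h
        apply hay
        calc a * y = y * (x + a) - x * y := by ring
          _ = 0 := by rw [h, hxy, sub_zero]
    · refine key' (x := x) (y := y + a) ⟨y, hy0, hxy⟩ ⟨a * x, hax, ?_⟩ ?_ ?_
      · calc (y + a) * (a * x) = (x * y) * a + (a * a) * x := by ring
          _ = 0 := by rw [hxy, haa]; ring
      · intro v hv
        refine reg_add_nil' haa hreg v ?_
        calc (x + y + a) * v = (x + (y + a)) * v := by ring
          _ = 0 := hv
      · intro h
        apply hax
        calc a * x = x * (y + a) - x * y := by ring
          _ = 0 := by rw [h, hxy, sub_zero]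
  · exact key' hx hy hreg hxy
end

section
/- Let R be a non-reduced commutative ring with identity which is not an integral domain. Then any two distinct nonzero nilpotent ideals of R are adjacent in the annihilator-ideal graph A_I(R); that is, the induced subgraph of A_I(R) on the nonzero nilpotent ideals is a complete graph. -/
lemma key_aux {R : Type*} [CommRing R] (I J : Ideal R) (hJ : J ≠ ⊥)
    {n : ℕ} (hn : 0 < n) (hIn : I ^ n = ⊥) :
    ∃ x : R, x ∈ Submodule.annihilator (I * J) ∧ x ∉ Submodule.annihilator J := by
  have hS : ∃ m, I ^ m * J = ⊥ := ⟨n, by simp [hIn]⟩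
  classical
  set m := Nat.find hS with hm
  have hmS : I ^ m * J = ⊥ := Nat.find_spec hS
  have hm0 : m ≠ 0 := by
    intro h0
    apply hJ
    rw [h0, pow_zero, one_mul] at hmS
    exact hmS
  have hlt : ¬ (I ^ (m - 1) * J = ⊥) := Nat.find_min hS (Nat.sub_lt (Nat.pos_of_ne_zero hm0) one_pos)
  -- find x ∈ I^(m-1) with x ∉ Ann J
  have : ¬ (I ^ (m - 1) ≤ Submodule.annihilator J) := by
    intro hle
    apply hlt
    rw [eq_bot_iff]
    rw [Ideal.mul_le]
    intro a ha b hb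
    have := Submodule.mem_annihilator.mp (hle ha) b hb
    simpa [smul_eq_mul] using this
  obtain ⟨x, hx, hxJ⟩ := Set.not_subset.mp this
  refine ⟨x, ?_, hxJ⟩
  rw [Submodule.mem_annihilator]
  intro z hz
  have : x * z ∈ I ^ (m - 1) * (I * J) := Ideal.mul_mem_mul hx hz
  rw [← mul_assoc, ← pow_succ, Nat.sub_add_cancel (Nat.pos_of_ne_zero hm0)] at this
  rw [hmS] at this
  simpa using this


theorem stmt13 (R : Type*) [CommRing R] [Nontrivial R] (hdom : ¬IsDomain R)
    (hnred : ¬IsReduced R)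
    (I J : AnnVert R) (hIJ : I ≠ J)
    (hI : ∃ n : ℕ, 0 < n ∧ I.1 ^ n = ⊥) (hJ : ∃ n : ℕ, 0 < n ∧ J.1 ^ n = ⊥) :
    (annihilatorIdealGraph R).Adj I J := by
  refine ⟨hIJ, ?_⟩
  intro h
  obtain ⟨n, hn, hIn⟩ := hI
  obtain ⟨k, hk, hJk⟩ := hJ
  obtain ⟨x, hx1, hx2⟩ := key_aux I.1 J.1 J.2.1 hn hIn
  obtain ⟨y, hy1, hy2⟩ := key_aux J.1 I.1 I.2.1 hk hJk
  rw [mul_comm] at hy1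
  -- from h, x ∈ Ann I ∪ Ann J, so x ∈ Ann I
  have hxI : x ∈ Submodule.annihilator I.1 := by
    have : x ∈ (↑(Submodule.annihilator I.1) ∪ ↑(Submodule.annihilator J.1) : Set R) := by
      rw [← h]; exact hx1
    rcases this with h' | h'
    · exact h'
    · exact absurd h' hx2
  have hyJ : y ∈ Submodule.annihilator J.1 := by
    have : y ∈ (↑(Submodule.annihilator I.1) ∪ ↑(Submodule.annihilator J.1) : Set R) := by
      rw [← h]; exact hy1
    rcases this with h' | h'
    · exact absurd h' hy2
    · exact h'
  have hsum : x + y ∈ (↑(Submodule.annihilator I.1) ∪ ↑(Submodule.annihilator J.1) : Set R) := by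
    rw [← h]
    exact add_mem hx1 hy1
  rcases hsum with h' | h'
  · exact hy2 (by simpa using sub_mem h' hxI)
  · exact hx2 (by simpa using sub_mem h' hyJ)
end

section
/- Let R be a non-reduced commutative ring with identity which is not an integral domain, suppose R is not a principal ideal ring, and suppose Nil(R)² ≠ (0). Then the annihilator-ideal graph A_I(R) is not equal to the annihilating-ideal graph 𝔸𝔾(R), and the girth of A_I(R) equals 3. -/
/-! ### Auxiliary lemmas -/

open SimpleGraph in
/-- A graph containing a triangle has extended girth `3`. -/
lemma aux_tri_egirth {V : Type*} {G : SimpleGraph V} {a b c : V} (hab : G.Adj a b)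
    (hbc : G.Adj b c) (hca : G.Adj c a) (hac : a ≠ c) : G.egirth = 3 := by
  let w : G.Walk a a := .cons hab (.cons hbc (.cons hca .nil))
  have hcyc : w.IsCycle := by
    simp [w, Walk.isCycle_def, Walk.isTrail_def, hab.ne, hbc.ne, hca.ne, hac, Ne.symm hac,
      Sym2.eq, Sym2.rel_iff, hab.ne', hbc.ne', hca.ne']
  refine le_antisymm ?_ SimpleGraph.three_le_egirth
  have h1 : G.egirth ≤ (w.length : ℕ∞) := iInf_le_of_le a (iInf_le_of_le w (iInf_le _ hcyc))
  simpa [w] using h1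

section Aux

variable {R : Type*} [CommRing R]

lemma aux_mem_ann_span {r a : R} (h : r * a = 0) :
    r ∈ Submodule.annihilator (Ideal.span {a} : Ideal R) := by
  rw [Submodule.mem_annihilator]
  intro m hm
  obtain ⟨c, rfl⟩ := Ideal.mem_span_singleton.mp hm
  rw [smul_eq_mul, ← mul_assoc, h, zero_mul]

lemma aux_not_mem_ann {r a : R} {I : Ideal R} (ha : a ∈ I) (h : r * a ≠ 0) :
    r ∉ Submodule.annihilator I := fun hr =>
  h (by simpa [smul_eq_mul] using Submodule.mem_annihilator.mp hr a ha)

lemma aux_pow_eq_zero {x c : R} {n i j : ℕ} (hxn : x ^ n = 0) (hij : i < j)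
    (h : x ^ i = c * x ^ j) : x ^ i = 0 := by
  have hd : IsNilpotent (c * x ^ (j - i)) := by
    refine ⟨n, ?_⟩
    rw [mul_pow, ← pow_mul]
    have hz : x ^ ((j - i) * n) = 0 := by
      have hn' : n ≤ (j - i) * n := Nat.le_mul_of_pos_left n (by omega)
      calc x ^ ((j - i) * n) = x ^ n * x ^ ((j - i) * n - n) := by
              rw [← pow_add]; congr 1; omega
        _ = 0 := by rw [hxn, zero_mul]
    rw [hz, mul_zero]
  obtain ⟨v, hv⟩ := hd.isUnit_one_sub.exists_right_inv
  have hz2 : x ^ i * (1 - c * x ^ (j - i)) = 0 := by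
    have hkey : x ^ i * (c * x ^ (j - i)) = c * x ^ j := by
      rw [← mul_assoc, mul_comm (x ^ i) c, mul_assoc, ← pow_add]
      congr 2
      omega
    rw [mul_sub, mul_one, hkey, ← h, sub_self]
  calc x ^ i = x ^ i * ((1 - c * x ^ (j - i)) * v) := by rw [hv, mul_one]
    _ = (x ^ i * (1 - c * x ^ (j - i))) * v := by ring
    _ = 0 := by rw [hz2, zero_mul]

lemma aux_span_pow_ne {x : R} {n i j : ℕ} (hxn : x ^ n = 0) (hij : i < j) (hxi : x ^ i ≠ 0) :
    (Ideal.span {x ^ i} : Ideal R) ≠ Ideal.span {x ^ j} := by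
  intro hEq
  have hmem : x ^ i ∈ (Ideal.span {x ^ j} : Ideal R) := hEq ▸ Ideal.subset_span rfl
  obtain ⟨c, hc⟩ := Ideal.mem_span_singleton.mp hmem
  exact hxi (aux_pow_eq_zero hxn hij (hc.trans (mul_comm _ _)))

/-- Master lemma: a triangle `I—J—K` in which `I*K = J*K = ⊥` but `I*J ≠ ⊥`,
with a witness `r` showing `I` and `J` are adjacent in the annihilator-ideal graph,
yields both conclusions of the theorem. -/
lemma aux_master [Nontrivial R] (I J K : Ideal R)
    (hI : I ≠ ⊥) (hJ : J ≠ ⊥) (hK : K ≠ ⊥)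
    (hIJ : I ≠ J) (hIK : I ≠ K) (hJK : J ≠ K)
    (hIK0 : I * K = ⊥) (hJK0 : J * K = ⊥) (hIJ0 : I * J ≠ ⊥)
    (r : R) (hr : r ∈ Submodule.annihilator (I * J))
    (hrI : r ∉ Submodule.annihilator I) (hrJ : r ∉ Submodule.annihilator J) :
    annihilatorIdealGraph R ≠ annihilatingIdealGraph R ∧
      (annihilatorIdealGraph R).egirth = 3 := by
  obtain ⟨k, hkK, hk0⟩ := (Submodule.ne_bot_iff K).mp hK
  obtain ⟨i, hiI, hi0⟩ := (Submodule.ne_bot_iff I).mp hI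
  have hAnnI : Submodule.annihilator I ≠ ⊥ := by
    refine (Submodule.ne_bot_iff _).mpr ⟨k, ?_, hk0⟩
    refine Submodule.mem_annihilator.mpr fun m hm => ?_
    have : m * k ∈ I * K := Submodule.mul_mem_mul hm hkK
    rw [hIK0] at this
    simpa [smul_eq_mul, mul_comm] using this
  have hAnnJ : Submodule.annihilator J ≠ ⊥ := by
    refine (Submodule.ne_bot_iff _).mpr ⟨k, ?_, hk0⟩
    refine Submodule.mem_annihilator.mpr fun m hm => ?_
    have : m * k ∈ J * K := Submodule.mul_mem_mul hm hkK
    rw [hJK0] at this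
    simpa [smul_eq_mul, mul_comm] using this
  have hAnnK : Submodule.annihilator K ≠ ⊥ := by
    refine (Submodule.ne_bot_iff _).mpr ⟨i, ?_, hi0⟩
    refine Submodule.mem_annihilator.mpr fun m hm => ?_
    have : i * m ∈ I * K := Submodule.mul_mem_mul hiI hm
    rw [hIK0] at this
    simpa [smul_eq_mul] using this
  set vI : AnnVert R := ⟨I, hI, hAnnI⟩
  set vJ : AnnVert R := ⟨J, hJ, hAnnJ⟩
  set vK : AnnVert R := ⟨K, hK, hAnnK⟩
  have hvIJ : vI ≠ vJ := fun h => hIJ (congrArg Subtype.val h)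
  have hvIK : vI ≠ vK := fun h => hIK (congrArg Subtype.val h)
  have hvJK : vJ ≠ vK := fun h => hJK (congrArg Subtype.val h)
  -- the special edge
  have edge1 : (annihilatorIdealGraph R).Adj vI vJ := by
    refine ⟨hvIJ, fun hset => ?_⟩
    have hmem : r ∈ (↑(Submodule.annihilator I) ∪ ↑(Submodule.annihilator J) : Set R) :=
      hset ▸ hr
    rcases hmem with h | h
    · exact hrI h
    · exact hrJ h
  -- annihilating edges are annihilator edges
  have edgeAG : ∀ A B : AnnVert R, A ≠ B → A.1 * B.1 = ⊥ →
      (annihilatorIdealGraph R).Adj A B := by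
    intro A B hne h0
    refine ⟨hne, fun hset => ?_⟩
    have h1 : (1 : R) ∈ Submodule.annihilator (A.1 * B.1) := by
      rw [h0, Submodule.annihilator_bot]; trivial
    have hmem : (1 : R) ∈ (↑(Submodule.annihilator A.1) ∪ ↑(Submodule.annihilator B.1) :
        Set R) := hset ▸ h1
    rcases hmem with h | h
    · refine A.2.1 ((Submodule.eq_bot_iff _).mpr fun m hm => ?_)
      simpa using Submodule.mem_annihilator.mp h m hm
    · refine B.2.1 ((Submodule.eq_bot_iff _).mpr fun m hm => ?_)
      simpa using Submodule.mem_annihilator.mp h m hm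
  have edge2 : (annihilatorIdealGraph R).Adj vJ vK := edgeAG vJ vK hvJK hJK0
  have edge3 : (annihilatorIdealGraph R).Adj vK vI := edgeAG vK vI (Ne.symm hvIK)
    (by rw [mul_comm]; exact hIK0)
  constructor
  · intro hEq
    rw [hEq] at edge1
    exact hIJ0 edge1.2
  · exact aux_tri_egirth edge1 edge2 edge3 hvIK

end Aux

theorem stmt15 (R : Type*) [CommRing R] [Nontrivial R] (hdom : ¬IsDomain R)
    (hnred : ¬IsReduced R) (hnpir : ¬IsPrincipalIdealRing R)
    (hnil : (nilradical R) ^ 2 ≠ ⊥) :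
    annihilatorIdealGraph R ≠ annihilatingIdealGraph R ∧
    (annihilatorIdealGraph R).egirth = 3 := by
  classical
  -- extract nilpotents with nonzero product
  have hab : ∃ a b : R, IsNilpotent a ∧ IsNilpotent b ∧ a * b ≠ 0 := by
    by_contra h
    push_neg at h
    apply hnil
    rw [pow_two, eq_bot_iff]
    refine Ideal.mul_le.mpr fun a haN b hbN => ?_
    rw [Submodule.mem_bot]
    exact h a b (mem_nilradical.mp haN) (mem_nilradical.mp hbN)
  obtain ⟨a, b, hna, hnb, hab0⟩ := hab
  by_cases hsq : ∃ x : R, IsNilpotent x ∧ x * x ≠ 0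
  · -- there is a nilpotent of square ≠ 0
    obtain ⟨x, hnx, hx2⟩ := hsq
    have hP : ∃ n : ℕ, x ^ n = 0 := hnx
    set n := Nat.find hP with hn_def
    have hxn : x ^ n = 0 := Nat.find_spec hP
    have hlt : ∀ k, k < n → x ^ k ≠ 0 := fun k hk => Nat.find_min hP hk
    have h2 : x ^ 2 ≠ 0 := by rwa [pow_two]
    have h3n : 3 ≤ n := by
      by_contra hcon
      apply h2
      calc x ^ 2 = x ^ n * x ^ (2 - n) := by rw [← pow_add]; congr 1; omega
        _ = 0 := by rw [hxn, zero_mul]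
    have hx1 : x ≠ 0 := by
      have := hlt 1 (by omega); rwa [pow_one] at this
    by_cases h4 : 4 ≤ n
    · -- Case A: index at least 4
      refine aux_master (Ideal.span {x}) (Ideal.span {x ^ 2}) (Ideal.span {x ^ (n - 1)})
        ?_ ?_ ?_ ?_ ?_ ?_ ?_ ?_ ?_ (x ^ (n - 3)) ?_ ?_ ?_
      · simpa [Ideal.span_singleton_eq_bot] using hx1
      · simpa [Ideal.span_singleton_eq_bot] using h2
      · simpa [Ideal.span_singleton_eq_bot] using hlt (n - 1) (by omega)
      · have := aux_span_pow_ne (i := 1) (j := 2) hxn (by omega) (by rwa [pow_one])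
        rwa [pow_one] at this
      · have := aux_span_pow_ne (i := 1) (j := n - 1) hxn (by omega) (by rwa [pow_one])
        rwa [pow_one] at this
      · exact aux_span_pow_ne (i := 2) (j := n - 1) hxn (by omega) h2
      · rw [Ideal.span_singleton_mul_span_singleton]
        have : x * x ^ (n - 1) = 0 := by
          calc x * x ^ (n - 1) = x ^ n := by rw [← pow_succ']; congr 1; omega
            _ = 0 := hxn
        rw [this]
        exact Ideal.span_singleton_eq_bot.mpr rfl
      · rw [Ideal.span_singleton_mul_span_singleton]
        have : x ^ 2 * x ^ (n - 1) = 0 := by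
          calc x ^ 2 * x ^ (n - 1) = x ^ n * x ^ 1 := by rw [← pow_add, ← pow_add]; congr 1; omega
            _ = 0 := by rw [hxn, zero_mul]
        rw [this]
        exact Ideal.span_singleton_eq_bot.mpr rfl
      · rw [Ideal.span_singleton_mul_span_singleton]
        have h3 : x * x ^ 2 = x ^ 3 := by rw [← pow_succ']
        rw [h3]
        simpa [Ideal.span_singleton_eq_bot] using hlt 3 (by omega)
      · rw [Ideal.span_singleton_mul_span_singleton]
        refine aux_mem_ann_span ?_
        calc x ^ (n - 3) * (x * x ^ 2) = x ^ n := by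
              rw [← pow_succ', ← pow_add]; congr 1; omega
          _ = 0 := hxn
      · refine aux_not_mem_ann (Ideal.subset_span rfl) ?_
        have : x ^ (n - 3) * x = x ^ (n - 2) := by rw [← pow_succ]; congr 1; omega
        rw [this]
        exact hlt (n - 2) (by omega)
      · refine aux_not_mem_ann (Ideal.subset_span rfl) ?_
        have : x ^ (n - 3) * x ^ 2 = x ^ (n - 1) := by rw [← pow_add]; congr 1; omega
        rw [this]
        exact hlt (n - 1) (by omega)
    · -- n = 3
      have hn3 : n = 3 := by omega
      have hx3 : x ^ 3 = 0 := by rw [← hn3]; exact hxn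
      by_cases hA : ∀ y : R, y * x ^ 2 = 0 → y ∈ Ideal.span {x}
      · by_cases hB : ∃ c : R, c ∉ Ideal.span {x} ∧
            (Ideal.span {c * x} : Ideal R) ≠ Ideal.span {x}
        · -- Case B1b
          obtain ⟨c, hc1, hc2⟩ := hB
          have hcx2 : c * x ^ 2 ≠ 0 := fun h => hc1 (hA c h)
          have hcx : c * x ≠ 0 := fun h => hcx2 (by rw [pow_two, ← mul_assoc, h, zero_mul])
          refine aux_master (Ideal.span {x}) (Ideal.span {c * x}) (Ideal.span {x ^ 2})
            ?_ ?_ ?_ ?_ ?_ ?_ ?_ ?_ ?_ x ?_ ?_ ?_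
          · simpa [Ideal.span_singleton_eq_bot] using hx1
          · simpa [Ideal.span_singleton_eq_bot] using hcx
          · simpa [Ideal.span_singleton_eq_bot] using h2
          · exact Ne.symm hc2
          · have := aux_span_pow_ne (i := 1) (j := 2) hx3 (by omega) (by rwa [pow_one])
            rwa [pow_one] at this
          · intro hEq
            have hmem : c * x ∈ (Ideal.span {x ^ 2} : Ideal R) := hEq ▸ Ideal.subset_span rfl
            obtain ⟨d, hd⟩ := Ideal.mem_span_singleton.mp hmem
            apply hcx2
            calc c * x ^ 2 = (c * x) * x := by ring
              _ = x ^ 2 * d * x := by rw [hd]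
              _ = x ^ 3 * d := by ring
              _ = 0 := by rw [hx3, zero_mul]
          · rw [Ideal.span_singleton_mul_span_singleton]
            have : x * x ^ 2 = 0 := by rw [← pow_succ', hx3]
            rw [this]
            exact Ideal.span_singleton_eq_bot.mpr rfl
          · rw [Ideal.span_singleton_mul_span_singleton]
            have : c * x * x ^ 2 = 0 := by
              calc c * x * x ^ 2 = c * x ^ 3 := by ring
                _ = 0 := by rw [hx3, mul_zero]
            rw [this]
            exact Ideal.span_singleton_eq_bot.mpr rfl
          · rw [Ideal.span_singleton_mul_span_singleton]
            have : x * (c * x) = c * x ^ 2 := by ring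
            rw [this]
            simpa [Ideal.span_singleton_eq_bot] using hcx2
          · rw [Ideal.span_singleton_mul_span_singleton]
            refine aux_mem_ann_span ?_
            calc x * (x * (c * x)) = c * x ^ 3 := by ring
              _ = 0 := by rw [hx3, mul_zero]
          · exact aux_not_mem_ann (Ideal.subset_span rfl) (by rwa [← pow_two])
          · refine aux_not_mem_ann (Ideal.subset_span rfl) ?_
            have : x * (c * x) = c * x ^ 2 := by ring
            rw [this]
            exact hcx2
        · -- derive that R is a principal ideal ring: contradiction
          exfalso
          push_neg at hB
          have hUnit : ∀ c : R, c ∉ Ideal.span {x} → IsUnit c := by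
            intro c hc
            have hspan := hB c hc
            have hx_mem : x ∈ (Ideal.span {c * x} : Ideal R) := by
              rw [hspan]; exact Ideal.subset_span rfl
            obtain ⟨d, hd⟩ := Ideal.mem_span_singleton.mp hx_mem
            have h1 : (1 - c * d) * x = 0 := by linear_combination hd
            have h2' : (1 - c * d) * x ^ 2 = 0 := by
              rw [pow_two, ← mul_assoc, h1, zero_mul]
            obtain ⟨t, ht⟩ := Ideal.mem_span_singleton.mp (hA _ h2')
            have hnt : IsNilpotent (x * t) := ⟨3, by rw [mul_pow, hx3, zero_mul]⟩
            have hu : IsUnit (1 - x * t) := hnt.isUnit_one_sub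
            have heq : 1 - x * t = c * d := by linear_combination ht
            rw [heq] at hu
            exact isUnit_of_mul_isUnit_left hu
          refine hnpir ⟨fun S => ?_⟩
          by_cases hS1 : ∃ y ∈ S, y ∉ Ideal.span {x}
          · obtain ⟨y, hyS, hy⟩ := hS1
            rw [Ideal.eq_top_of_isUnit_mem S hyS (hUnit y hy)]
            exact top_isPrincipal
          · push_neg at hS1
            by_cases hS2 : ∃ y ∈ S, y ∉ Ideal.span {x ^ 2}
            · obtain ⟨y, hyS, hy2⟩ := hS2
              obtain ⟨c, hc⟩ := Ideal.mem_span_singleton.mp (hS1 y hyS)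
              have hcx : c ∉ Ideal.span {x} := by
                intro h
                obtain ⟨e, he⟩ := Ideal.mem_span_singleton.mp h
                exact hy2 (Ideal.mem_span_singleton.mpr ⟨e, by rw [hc, he]; ring⟩)
              have hyx : (Ideal.span {y} : Ideal R) = Ideal.span {x} := by
                rw [hc]
                exact Ideal.span_singleton_mul_right_unit (hUnit c hcx) x
              refine ⟨⟨y, ?_⟩⟩
              refine le_antisymm (fun z hz => ?_) ?_
              · rw [show (Submodule.span R {y} : Ideal R) = Ideal.span {y} from rfl, hyx]
                exact hS1 z hz
              · rw [show (Submodule.span R {y} : Ideal R) = Ideal.span {y} from rfl,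
                  Ideal.span_le, Set.singleton_subset_iff]
                exact hyS
            · push_neg at hS2
              by_cases hS3 : S = ⊥
              · rw [hS3]; exact bot_isPrincipal
              · obtain ⟨y, hyS, hy0⟩ := (Submodule.ne_bot_iff S).mp hS3
                obtain ⟨e, he⟩ := Ideal.mem_span_singleton.mp (hS2 y hyS)
                have hex : e ∉ Ideal.span {x} := by
                  intro h
                  obtain ⟨f, hf⟩ := Ideal.mem_span_singleton.mp h
                  apply hy0
                  calc y = x ^ 2 * (x * f) := by rw [he, hf]
                    _ = x ^ 3 * f := by ring
                    _ = 0 := by rw [hx3, zero_mul]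
                have hyx : (Ideal.span {y} : Ideal R) = Ideal.span {x ^ 2} := by
                  rw [he]
                  exact Ideal.span_singleton_mul_right_unit (hUnit e hex) (x ^ 2)
                refine ⟨⟨y, ?_⟩⟩
                refine le_antisymm (fun z hz => ?_) ?_
                · rw [show (Submodule.span R {y} : Ideal R) = Ideal.span {y} from rfl, hyx]
                  exact hS2 z hz
                · rw [show (Submodule.span R {y} : Ideal R) = Ideal.span {y} from rfl,
                    Ideal.span_le, Set.singleton_subset_iff]
                  exact hyS
      · -- Case B1a
        push_neg at hA
        obtain ⟨y₀, hy₀x2, hy₀⟩ := hA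
        set J : Ideal R := Submodule.annihilator (Ideal.span {x ^ 2} : Ideal R) with hJ_def
        have hx_in_J : x ∈ J := aux_mem_ann_span (by rw [← pow_succ', hx3])
        have hy₀_in_J : y₀ ∈ J := aux_mem_ann_span hy₀x2
        refine aux_master (Ideal.span {x}) J (Ideal.span {x ^ 2})
          ?_ ?_ ?_ ?_ ?_ ?_ ?_ ?_ ?_ x ?_ ?_ ?_
        · simpa [Ideal.span_singleton_eq_bot] using hx1
        · exact (Submodule.ne_bot_iff _).mpr ⟨x, hx_in_J, hx1⟩
        · simpa [Ideal.span_singleton_eq_bot] using h2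
        · intro h
          exact hy₀ (h ▸ hy₀_in_J)
        · have := aux_span_pow_ne (i := 1) (j := 2) hx3 (by omega) (by rwa [pow_one])
          rwa [pow_one] at this
        · intro h
          have hmem : x ∈ (Ideal.span {x ^ 2} : Ideal R) := h ▸ hx_in_J
          obtain ⟨d, hd⟩ := Ideal.mem_span_singleton.mp hmem
          apply hx1
          have : x ^ 1 = d * x ^ 2 := by rw [pow_one]; linear_combination hd
          have := aux_pow_eq_zero hx3 (by omega : 1 < 2) this
          rwa [pow_one] at this
        · rw [Ideal.span_singleton_mul_span_singleton]
          have : x * x ^ 2 = 0 := by rw [← pow_succ', hx3]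
          rw [this]
          exact Ideal.span_singleton_eq_bot.mpr rfl
        · rw [eq_bot_iff]
          refine Ideal.mul_le.mpr fun j hj k hk => ?_
          rw [Submodule.mem_bot]
          simpa [smul_eq_mul] using Submodule.mem_annihilator.mp hj k hk
        · refine (Submodule.ne_bot_iff _).mpr ⟨x * x, ?_, by rwa [← pow_two]⟩
          exact Submodule.mul_mem_mul (Ideal.subset_span rfl) hx_in_J
        · refine Submodule.mem_annihilator.mpr fun m hm => ?_
          rw [smul_eq_mul]
          refine Submodule.mul_induction_on hm (fun p hp q hq => ?_)
            (fun p q h1 h2' => by rw [mul_add, h1, h2', add_zero])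
          obtain ⟨cp, hcp⟩ := Ideal.mem_span_singleton.mp hp
          have hq2 : q * x ^ 2 = 0 := by
            simpa [smul_eq_mul] using Submodule.mem_annihilator.mp hq (x ^ 2)
              (Ideal.subset_span rfl)
          calc x * (p * q) = cp * (q * x ^ 2) := by rw [hcp]; ring
            _ = 0 := by rw [hq2, mul_zero]
        · exact aux_not_mem_ann (Ideal.subset_span rfl) (by rwa [← pow_two])
        · exact aux_not_mem_ann hx_in_J (by rwa [← pow_two])
  · -- Case B2: all nilpotents square to zero
    push_neg at hsq
    have ha2 : a * a = 0 := hsq a hna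
    have hb2 : b * b = 0 := hsq b hnb
    have ha0 : a ≠ 0 := left_ne_zero_of_mul hab0
    have hb0 : b ≠ 0 := right_ne_zero_of_mul hab0
    refine aux_master (Ideal.span {a}) (Ideal.span {b}) (Ideal.span {a * b})
      ?_ ?_ ?_ ?_ ?_ ?_ ?_ ?_ ?_ (a + b) ?_ ?_ ?_
    · simpa [Ideal.span_singleton_eq_bot] using ha0
    · simpa [Ideal.span_singleton_eq_bot] using hb0
    · simpa [Ideal.span_singleton_eq_bot] using hab0
    · intro h
      have hmem : b ∈ (Ideal.span {a} : Ideal R) := h.symm ▸ Ideal.subset_span rfl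
      obtain ⟨c, hc⟩ := Ideal.mem_span_singleton.mp hmem
      apply hab0
      calc a * b = a * (a * c) := by rw [hc]
        _ = (a * a) * c := by ring
        _ = 0 := by rw [ha2, zero_mul]
    · intro h
      have hmem : a ∈ (Ideal.span {a * b} : Ideal R) := h ▸ Ideal.subset_span rfl
      obtain ⟨c, hc⟩ := Ideal.mem_span_singleton.mp hmem
      apply hab0
      have : a * b = (a * b * c) * b := by rw [← hc]
      calc a * b = (a * b * c) * b := this
        _ = (a * c) * (b * b) := by ring
        _ = 0 := by rw [hb2, mul_zero]
    · intro h
      have hmem : b ∈ (Ideal.span {a * b} : Ideal R) := h ▸ Ideal.subset_span rfl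
      obtain ⟨c, hc⟩ := Ideal.mem_span_singleton.mp hmem
      apply hab0
      calc a * b = a * (a * b * c) := by rw [← hc]
        _ = (a * a) * (b * c) := by ring
        _ = 0 := by rw [ha2, zero_mul]
    · rw [Ideal.span_singleton_mul_span_singleton]
      have : a * (a * b) = 0 := by
        calc a * (a * b) = (a * a) * b := by ring
          _ = 0 := by rw [ha2, zero_mul]
      rw [this]
      exact Ideal.span_singleton_eq_bot.mpr rfl
    · rw [Ideal.span_singleton_mul_span_singleton]
      have : b * (a * b) = 0 := by
        calc b * (a * b) = a * (b * b) := by ring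
          _ = 0 := by rw [hb2, mul_zero]
      rw [this]
      exact Ideal.span_singleton_eq_bot.mpr rfl
    · rw [Ideal.span_singleton_mul_span_singleton]
      simpa [Ideal.span_singleton_eq_bot] using hab0
    · rw [Ideal.span_singleton_mul_span_singleton]
      refine aux_mem_ann_span ?_
      linear_combination b * ha2 + a * hb2
    · refine aux_not_mem_ann (Ideal.subset_span rfl) ?_
      have : (a + b) * a = a * b := by linear_combination ha2
      rw [this]
      exact hab0
    · refine aux_not_mem_ann (Ideal.subset_span rfl) ?_
      have : (a + b) * b = a * b := by linear_combination hb2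
      rw [this]
      exact hab0
end

section
/- Let R be a commutative ring with identity which is not an integral domain, and let I be a minimal ideal of R (a nonzero ideal containing no nonzero proper subideal). Then I is a vertex of both the annihilating-ideal graph 𝔸𝔾(R) and the annihilator-ideal graph A_I(R), and the neighborhood of I in 𝔸𝔾(R) equals the neighborhood of I in A_I(R); that is, for every nonzero annihilating ideal J ≠ I, I and J are adjacent in A_I(R) if and only if IJ = (0). -/
theorem ann_ne_bot (R : Type*) [CommRing R] [Nontrivial R] (hdom : ¬IsDomain R)
    (I : Ideal R) (hI : IsAtom I) : Submodule.annihilator I ≠ ⊥ := by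
  have hzd : ∃ a b : R, a * b = 0 ∧ a ≠ 0 ∧ b ≠ 0 := by
    by_contra h
    push_neg at h
    have : NoZeroDivisors R := ⟨fun {a b} hab => by
      by_contra hc; push_neg at hc
      exact hc.2 (h a b hab hc.1)⟩
    exact hdom (NoZeroDivisors.to_isDomain R)
  by_cases hII : I * I = ⊥
  · intro h
    have hle : I ≤ Submodule.annihilator I := by
      intro x hx
      rw [Submodule.mem_annihilator]
      intro n hn
      have : x * n ∈ I * I := Ideal.mul_mem_mul hx hn
      rw [hII] at this
      simpa using this
    exact hI.1 (le_bot_iff.mp (h ▸ hle))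
  · have hII' : I * I = I := (hI.le_iff.mp Ideal.mul_le_right).resolve_left hII
    have : ∃ a ∈ I, Ideal.span {a} * I ≠ ⊥ := by
      by_contra h
      push_neg at h
      apply hII
      rw [eq_bot_iff, Ideal.mul_le]
      intro a ha b hb
      have : a * b ∈ Ideal.span {a} * I :=
        Ideal.mul_mem_mul (Ideal.mem_span_singleton_self a) hb
      rw [h a ha] at this
      simpa using this
    obtain ⟨a, haI, haI'⟩ := this
    have hspan : Ideal.span {a} * I = I :=
      (hI.le_iff.mp Ideal.mul_le_right).resolve_left haI'
    have haself : a ∈ Ideal.span {a} * I := by rw [hspan]; exact haI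
    obtain ⟨e, heI, hae⟩ := Ideal.mem_span_singleton_mul.mp haself
    -- K = I ⊓ annihilator (span {a}) = ⊥
    set K := I ⊓ Submodule.annihilator (Ideal.span {a}) with hK
    have hKbot : K = ⊥ := by
      rcases hI.le_iff.mp (inf_le_left : K ≤ I) with h | h
      · exact h
      · exfalso
        apply haI'
        rw [eq_bot_iff, Ideal.mul_le]
        intro x hx y hy
        have hy' : y ∈ I ⊓ Submodule.annihilator (Ideal.span {a}) := by rw [h]; exact hy
        have := (Submodule.mem_annihilator.mp hy'.2) x hx
        simpa [mul_comm, smul_eq_mul] using this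
    have hee : e * e = e := by
      have hmem : e - e * e ∈ K := by
        refine Submodule.mem_inf.mpr ⟨?_, ?_⟩
        · exact I.sub_mem heI (I.mul_mem_left e heI)
        · rw [Submodule.mem_annihilator]
          intro n hn
          rw [Ideal.mem_span_singleton] at hn
          obtain ⟨c, rfl⟩ := hn
          have : a * (e - e * e) = 0 := by linear_combination (-e) * hae
          calc (e - e * e) • (a * c) = (a * (e - e * e)) * c := by rw [smul_eq_mul]; ring
          _ = 0 := by rw [this, zero_mul]
      rw [hKbot] at hmem
      have := (Submodule.mem_bot R).mp hmem
      linear_combination -this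
    have hane : a ≠ 0 := by
      rintro rfl
      apply haI'
      rw [Ideal.span_singleton_eq_bot.mpr rfl, Submodule.bot_mul]
    have hene : e ≠ 0 := by
      rintro rfl
      rw [mul_zero] at hae
      exact hane hae.symm
    have hspanE : Ideal.span {e} = I :=
      (hI.le_iff.mp ((Ideal.span_singleton_le_iff_mem I).mpr heI)).resolve_left
        (by simpa [Ideal.span_singleton_eq_bot] using hene)
    have hmemann : (1 : R) - e ∈ Submodule.annihilator I := by
      rw [Submodule.mem_annihilator]
      intro n hn
      rw [← hspanE, Ideal.mem_span_singleton'] at hn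
      obtain ⟨c, rfl⟩ := hn
      have : ((1 : R) - e) * (c * e) = c * e - c * (e * e) := by ring
      rw [smul_eq_mul, this, hee, sub_self]
    have hne1 : (1 : R) - e ≠ 0 := by
      intro h
      have he1 : e = 1 := by linear_combination -h
      rw [he1, Ideal.span_singleton_one] at hspanE
      obtain ⟨x, y, hxy, hx, hy⟩ := hzd
      have : Ideal.span {x} = ⊤ := by
        rcases hI.le_iff.mp (le_top.trans hspanE.le) with h' | h'
        · exact absurd (Ideal.span_singleton_eq_bot.mp h') hx
        · rw [h', ← hspanE]
      have hu : IsUnit x := Ideal.span_singleton_eq_top.mp this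
      obtain ⟨u, rfl⟩ := hu
      exact hy (by
        have := congrArg (fun z => (↑u⁻¹ : R) * z) hxy
        simpa [← mul_assoc] using this)
    intro h
    rw [h] at hmemann
    exact hne1 ((Submodule.mem_bot R).mp hmemann)

theorem adj_iff (R : Type*) [CommRing R] [Nontrivial R] (hdom : ¬IsDomain R)
    (I : Ideal R) (hI : IsAtom I)
    (J : {K : Ideal R // K ≠ ⊥ ∧ Submodule.annihilator K ≠ ⊥})
    (hJ : J.1 ≠ I) :
    ((⟨I, hI.1, ann_ne_bot R hdom I hI⟩ : {K : Ideal R // K ≠ ⊥ ∧ Submodule.annihilator K ≠ ⊥}) ≠ J ∧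
    ((Submodule.annihilator (I * J.1) : Ideal R) : Set R) ≠
      ↑(Submodule.annihilator I) ∪ ↑(Submodule.annihilator J.1)) ↔ I * J.1 = ⊥ := by
  constructor
  · rintro ⟨-, hadj⟩
    by_contra hne
    apply hadj
    have h1 : I * J.1 = I := (hI.le_iff.mp Ideal.mul_le_left).resolve_left hne
    have h2 : Submodule.annihilator J.1 ≤ Submodule.annihilator I := by
      rw [← h1]
      exact Submodule.annihilator_mono Ideal.mul_le_right
    rw [h1, Set.union_eq_self_of_subset_right h2]
  · intro hbot
    refine ⟨fun hc => hJ (congrArg Subtype.val hc.symm), ?_⟩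
    rw [hbot, Submodule.annihilator_bot]
    intro h
    obtain ⟨x, hx⟩ : ∃ x : R, x ∉ Submodule.annihilator I := by
      by_contra hc; push_neg at hc
      exact absurd (Submodule.annihilator_eq_top_iff.mp (eq_top_iff.mpr fun z _ => hc z)) hI.1
    obtain ⟨y, hy⟩ : ∃ y : R, y ∉ Submodule.annihilator J.1 := by
      by_contra hc; push_neg at hc
      exact absurd (Submodule.annihilator_eq_top_iff.mp (eq_top_iff.mpr fun z _ => hc z)) J.2.1
    have hx' : x ∈ Submodule.annihilator J.1 := by
      have : x ∈ ((⊤ : Ideal R) : Set R) := trivial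
      rw [h] at this
      exact this.resolve_left hx
    have hy' : y ∈ Submodule.annihilator I := by
      have : y ∈ ((⊤ : Ideal R) : Set R) := trivial
      rw [h] at this
      exact this.resolve_right hy
    have hxy : x + y ∈ ((⊤ : Ideal R) : Set R) := trivial
    rw [h] at hxy
    rcases hxy with h1 | h1
    · exact hx (by simpa using Submodule.sub_mem _ h1 hy')
    · exact hy (by simpa using Submodule.sub_mem _ h1 hx')

theorem stmt16 (R : Type*) [CommRing R] [Nontrivial R] (hdom : ¬IsDomain R)
    (I : Ideal R) (hI : IsAtom I) :
    ∃ hv : I ≠ ⊥ ∧ Submodule.annihilator I ≠ ⊥,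
      ∀ J : AnnVert R, J ≠ ⟨I, hv⟩ →
        ((annihilatorIdealGraph R).Adj ⟨I, hv⟩ J ↔ I * J.1 = ⊥) := by
  refine ⟨⟨hI.1, ann_ne_bot R hdom I hI⟩, fun J hJ => ?_⟩
  have hJ' : J.1 ≠ I := fun hc => hJ (Subtype.ext hc)
  exact adj_iff R hdom I hI J hJ'
end

section
/- Let R be a commutative ring with identity which is not an integral domain, suppose the annihilator-ideal graph A_I(R) is not equal to the annihilating-ideal graph 𝔸𝔾(R), and suppose 𝔸𝔾(R) is a star graph. Then: (1) R is indecomposable, i.e., R is not ring-isomorphic to a direct product R₁ × R₂ of two nonzero rings; and (2) A_I(R) is a complete graph. -/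
universe u

section Aux

variable {R : Type u} [CommRing R]

/-- Product of two ideals is zero iff the first lies in the annihilator of the second. -/
lemma aux_mul_eq_bot_iff_le_ann {K W : Ideal R} :
    K * W = ⊥ ↔ K ≤ Submodule.annihilator W := by
  constructor
  · intro h r hr
    rw [Submodule.mem_annihilator]
    intro n hn
    have h2 : r * n ∈ K * W := Ideal.mul_mem_mul hr hn
    rw [h] at h2
    simpa using h2
  · intro h
    rw [eq_bot_iff]
    refine Ideal.mul_le.2 fun r hr s hs => ?_
    have := Submodule.mem_annihilator.1 (h hr) s hs
    simpa using this

lemma aux_ann_ne_bot_of_mul {K W : Ideal R} (h : K * W = ⊥) (hW : W ≠ ⊥) :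
    Submodule.annihilator K ≠ ⊥ := by
  have h1 : W ≤ Submodule.annihilator K :=
    aux_mul_eq_bot_iff_le_ann.1 (by rwa [mul_comm] at h)
  intro hb
  rw [hb, le_bot_iff] at h1
  exact hW h1

/-- A nonzero ideal whose annihilator contains `1` is zero; contrapositive form. -/
lemma aux_ann_ne_top {K : Ideal R} (hK : K ≠ ⊥) :
    (1 : R) ∉ Submodule.annihilator K := by
  intro h1
  apply hK
  rw [eq_bot_iff]
  intro s hs
  have := Submodule.mem_annihilator.1 h1 s hs
  simpa using this

/-- The annihilating-ideal graph is (edgewise) contained in the annihilator-ideal graph. -/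
lemma aux_AG_le_AI {u v : AnnVert R} (h : (annihilatingIdealGraph R).Adj u v) :
    (annihilatorIdealGraph R).Adj u v := by
  obtain ⟨hne, hmul⟩ := h
  refine ⟨hne, ?_⟩
  intro hset
  have h1 : (1 : R) ∈ (Submodule.annihilator (u.1 * v.1) : Set R) := by
    rw [hmul, Submodule.annihilator_bot]; trivial
  rw [hset] at h1
  rcases h1 with h1 | h1
  · exact aux_ann_ne_top u.2.1 h1
  · exact aux_ann_ne_top v.2.1 h1

end Aux

theorem stmt18 (R : Type u) [CommRing R] [Nontrivial R] (hdom : ¬IsDomain R)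
    (hne : annihilatorIdealGraph R ≠ annihilatingIdealGraph R)
    (hstar : (annihilatingIdealGraph R).IsStarGraph) :
    (¬ ∃ (R₁ R₂ : Type u) (_ : CommRing R₁) (_ : CommRing R₂)
        (_ : Nontrivial R₁) (_ : Nontrivial R₂), Nonempty (R ≃+* R₁ × R₂)) ∧
    (∀ I J : AnnVert R, I ≠ J → (annihilatorIdealGraph R).Adj I J) := by
  classical
  obtain ⟨c, t, -, -, hunion, hadj⟩ := hstar
  -- every vertex other than the center is in `t`
  have hmem : ∀ v : AnnVert R, v ≠ c → v ∈ t := by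
    intro v hv
    have : v ∈ ({c} : Set (AnnVert R)) ∪ t := by rw [hunion]; trivial
    rcases this with h | h
    · exact absurd (Set.mem_singleton_iff.1 h) hv
    · exact h
  -- any zero product of distinct vertices has one of them equal to the center
  have hcenter : ∀ u v : AnnVert R, u ≠ v → u.1 * v.1 = ⊥ → u = c ∨ v = c := by
    intro u v huv hmul
    have hAdj : (annihilatingIdealGraph R).Adj u v := ⟨huv, hmul⟩
    rcases (hadj u v).1 hAdj with ⟨h1, -⟩ | ⟨-, h2⟩
    · exact Or.inl (Set.mem_singleton_iff.1 h1)
    · exact Or.inr (Set.mem_singleton_iff.1 h2)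
  -- the center annihilates every other vertex
  have hS1 : ∀ v : AnnVert R, v ≠ c → c.1 * v.1 = ⊥ := by
    intro v hv
    have hAdj : (annihilatingIdealGraph R).Adj c v :=
      (hadj c v).2 (Or.inl ⟨rfl, hmem v hv⟩)
    exact hAdj.2
  have hc0 : c.1 ≠ ⊥ := c.2.1
  -- ideal-level version of the star property (L0)
  have L0 : ∀ K W : Ideal R, K ≠ ⊥ → W ≠ ⊥ → K * W = ⊥ →
      K = c.1 ∨ W = c.1 ∨ K = W := by
    intro K W hK hW h
    by_cases hKW : K = W
    · exact Or.inr (Or.inr hKW)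
    have hKann : Submodule.annihilator K ≠ ⊥ := aux_ann_ne_bot_of_mul h hW
    have hWann : Submodule.annihilator W ≠ ⊥ :=
      aux_ann_ne_bot_of_mul (by rwa [mul_comm] at h) hK
    have := hcenter ⟨K, hK, hKann⟩ ⟨W, hW, hWann⟩ (by simpa [Subtype.ext_iff] using hKW) h
    rcases this with h1 | h1
    · exact Or.inl (congrArg Subtype.val h1)
    · exact Or.inr (Or.inl (congrArg Subtype.val h1))
  -- products of distinct non-center vertices are nonzero (S2)
  have hS2 : ∀ (K W : Ideal R), K ≠ ⊥ → W ≠ ⊥ → K ≠ c.1 → W ≠ c.1 → K ≠ W →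
      K * W ≠ ⊥ := by
    intro K W hK hW hKc hWc hKW h
    rcases L0 K W hK hW h with h1 | h1 | h1
    · exact hKc h1
    · exact hWc h1
    · exact hKW h1
  -- extract an edge of A_I(R) which is not an edge of AG(R)
  have hdiff : ∃ u v : AnnVert R, (annihilatorIdealGraph R).Adj u v ∧
      ¬(annihilatingIdealGraph R).Adj u v := by
    by_contra hd
    push_neg at hd
    apply hne
    ext u v
    exact ⟨hd u v, fun h => aux_AG_le_AI h⟩
  obtain ⟨vi, vj, hAI, hnAG⟩ := hdiff
  obtain ⟨hij, hset⟩ := hAI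
  set I : Ideal R := vi.1 with hIdef
  set J : Ideal R := vj.1 with hJdef
  have hI0 : I ≠ ⊥ := vi.2.1
  have hJ0 : J ≠ ⊥ := vj.2.1
  have hIJ0 : I * J ≠ ⊥ := by
    intro h
    exact hnAG ⟨hij, h⟩
  have hic : vi ≠ c := by
    intro h
    subst h
    have hvj : vj ≠ vi := fun h => hij h.symm
    exact hnAG ⟨hij, hS1 vj hvj⟩
  have hjc : vj ≠ c := by
    intro h
    subst h
    exact hnAG ⟨hij, by rw [mul_comm]; exact hS1 vi hic⟩
  have hIc : I ≠ c.1 := fun h => hic (Subtype.ext h)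
  have hJc : J ≠ c.1 := fun h => hjc (Subtype.ext h)
  have hIJne : I ≠ J := fun h => hij (Subtype.ext h)
  -- get the witness x
  have hsub : (↑(Submodule.annihilator I) ∪ ↑(Submodule.annihilator J) : Set R) ⊆
      ↑(Submodule.annihilator (I * J)) := by
    apply Set.union_subset
    · exact Submodule.annihilator_mono Ideal.mul_le_left
    · exact Submodule.annihilator_mono Ideal.mul_le_right
  obtain ⟨x, hx1, hx2⟩ : ∃ x, x ∈ (↑(Submodule.annihilator (I * J)) : Set R) ∧
      x ∉ (↑(Submodule.annihilator I) ∪ ↑(Submodule.annihilator J) : Set R) := by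
    apply Set.not_subset.1
    intro h
    exact hset (subset_antisymm h hsub)
  have hxI : x ∉ Submodule.annihilator I := fun h => hx2 (Or.inl h)
  have hxJ : x ∉ Submodule.annihilator J := fun h => hx2 (Or.inr h)
  set X : Ideal R := Ideal.span {x} with hXdef
  have hXIJ : X * (I * J) = ⊥ := by
    apply aux_mul_eq_bot_iff_le_ann.2
    rw [Ideal.span_le, Set.singleton_subset_iff]
    exact hx1
  have hXI0 : X * I ≠ ⊥ := by
    intro h
    exact hxI (aux_mul_eq_bot_iff_le_ann.1 h (Ideal.mem_span_singleton_self x))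
  have hXJ0 : X * J ≠ ⊥ := by
    intro h
    exact hxJ (aux_mul_eq_bot_iff_le_ann.1 h (Ideal.mem_span_singleton_self x))
  -- (X*I)*J = ⊥ and (X*J)*I = ⊥
  have hXI_J : (X * I) * J = ⊥ := by rw [mul_assoc]; exact hXIJ
  have hXJ_I : (X * J) * I = ⊥ := by rw [mul_assoc, mul_comm J I]; exact hXIJ
  have hK1 : X * I = c.1 ∨ X * I = J := by
    rcases L0 (X * I) J hXI0 hJ0 hXI_J with h | h | h
    · exact Or.inl h
    · exact absurd h hJc
    · exact Or.inr h
  have hK2 : X * J = c.1 ∨ X * J = I := by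
    rcases L0 (X * J) I hXJ0 hI0 hXJ_I with h | h | h
    · exact Or.inl h
    · exact absurd h hIc
    · exact Or.inr h
  -- Main structural facts: c² = 0, and there are P ≠ Q, non-center, with P*Q = c.
  have key : c.1 * c.1 = ⊥ ∧
      ∃ P Q : Ideal R, P ≠ ⊥ ∧ Q ≠ ⊥ ∧ P ≠ c.1 ∧ Q ≠ c.1 ∧ P ≠ Q ∧ P * Q = c.1 := by
    rcases hK1 with hA | hA <;> rcases hK2 with hB | hB
    · -- X*I = c, X*J = c
      constructor
      · have h1 : (X * I) * (X * J) = ⊥ := by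
          rw [show (X * I) * (X * J) = X * (X * (I * J)) from by ring, hXIJ, Ideal.mul_bot]
        rw [hA, hB] at h1
        exact h1
      · have hX0 : X ≠ ⊥ := by
          intro h
          rw [h, Ideal.bot_mul] at hA
          exact hc0 hA.symm
        have hXc : X ≠ c.1 := by
          intro h
          rw [h] at hA
          rw [hS1 vi hic] at hA
          exact hc0 hA.symm
        by_cases hIX : I = X
        · refine ⟨I, J, hI0, hJ0, hIc, hJc, hIJne, ?_⟩
          rw [hIX]; exact hB
        · refine ⟨I, X, hI0, hX0, hIc, hXc, hIX, ?_⟩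
          rw [mul_comm]; exact hA
    · -- X*I = c, X*J = I
      have hI2 : I * I = ⊥ := by
        have h := hXJ_I
        rw [hB] at h
        exact h
      have hc2 : c.1 * c.1 = ⊥ := by
        have h : (X * I) * (X * I) = ⊥ := by
          rw [show (X * I) * (X * I) = (X * X) * (I * I) from by ring, hI2, Ideal.mul_bot]
        rw [hA] at h
        exact h
      refine ⟨hc2, I, J, hI0, hJ0, hIc, hJc, hIJne, ?_⟩
      -- I*J = c
      have hIJI : (I * J) * I = ⊥ := by
        rw [show (I * J) * I = (I * I) * J from by ring, hI2, Ideal.bot_mul]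
      rcases L0 (I * J) I hIJ0 hI0 hIJI with h | h | h
      · exact h
      · exact absurd h hIc
      · -- I*J = I: then c = X*I = X*(I*J) = ⊥, contradiction
        exfalso
        rw [← h] at hA
        rw [hXIJ] at hA
        exact hc0 hA.symm
    · -- X*I = J, X*J = c
      have hJ2 : J * J = ⊥ := by
        have h := hXI_J
        rw [hA] at h
        exact h
      have hc2 : c.1 * c.1 = ⊥ := by
        have h : (X * J) * (X * J) = ⊥ := by
          rw [show (X * J) * (X * J) = (X * X) * (J * J) from by ring, hJ2, Ideal.mul_bot]
        rw [hB] at h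
        exact h
      refine ⟨hc2, I, J, hI0, hJ0, hIc, hJc, hIJne, ?_⟩
      have hIJJ : (I * J) * J = ⊥ := by
        rw [mul_assoc, hJ2, Ideal.mul_bot]
      rcases L0 (I * J) J hIJ0 hJ0 hIJJ with h | h | h
      · exact h
      · exact absurd h hJc
      · exfalso
        rw [← h] at hB
        rw [show X * (I * J) = ⊥ from hXIJ] at hB
        exact hc0 hB.symm
    · -- X*I = J, X*J = I
      have hI2 : I * I = ⊥ := by
        have h := hXJ_I
        rw [hB] at h
        exact h
      have hJ2 : J * J = ⊥ := by
        have h := hXI_J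
        rw [hA] at h
        exact h
      have hIJc : I * J = c.1 := by
        have hIJI : (I * J) * I = ⊥ := by
          rw [show (I * J) * I = (I * I) * J from by ring, hI2, Ideal.bot_mul]
        rcases L0 (I * J) I hIJ0 hI0 hIJI with h | h | h
        · exact h
        · exact absurd h hIc
        · -- I*J = I ⇒ I ≤ J ⇒ I*J ≤ J*J = ⊥
          exfalso
          apply hIJ0
          have hle : I ≤ J := by rw [← h]; exact Ideal.mul_le_right
          rw [eq_bot_iff, ← hJ2]
          exact Ideal.mul_mono_left hle
      have hc2 : c.1 * c.1 = ⊥ := by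
        have h : (I * J) * (I * J) = ⊥ := by
          rw [show (I * J) * (I * J) = (I * I) * (J * J) from by ring, hI2, Ideal.bot_mul]
        rw [hIJc] at h
        exact h
      exact ⟨hc2, I, J, hI0, hJ0, hIc, hJc, hIJne, hIJc⟩
  obtain ⟨hc2, P, Q, hP0, hQ0, hPc, hQc, hPQne, hPQ⟩ := key
  constructor
  · -- Part 1: R is indecomposable
    rintro ⟨R₁, R₂, i₁, i₂, n₁, n₂, ⟨f⟩⟩
    set e : R := f.symm (1, 0) with hedef
    set e' : R := f.symm (0, 1) with he'def
    have hee' : e * e' = 0 := by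
      rw [hedef, he'def, ← map_mul, ← map_zero f.symm]
      congr 1
      ext <;> simp
    have hee : e * e = e := by
      rw [hedef, ← map_mul]
      congr 1
      ext <;> simp
    have he'e' : e' * e' = e' := by
      rw [he'def, ← map_mul]
      congr 1
      ext <;> simp
    have he0 : e ≠ 0 := by
      intro h
      have h2 : f e = f 0 := congrArg f h
      rw [map_zero, hedef, RingEquiv.apply_symm_apply] at h2
      exact one_ne_zero (congrArg Prod.fst h2)
    have he'0 : e' ≠ 0 := by
      intro h
      have h2 : f e' = f 0 := congrArg f h
      rw [map_zero, he'def, RingEquiv.apply_symm_apply] at h2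
      exact one_ne_zero (congrArg Prod.snd h2)
    set A : Ideal R := Ideal.span {e} with hAdef
    set B : Ideal R := Ideal.span {e'} with hBdef
    have hA0 : A ≠ ⊥ := by
      rw [hAdef, Ne, Ideal.span_singleton_eq_bot]
      exact he0
    have hB0 : B ≠ ⊥ := by
      rw [hBdef, Ne, Ideal.span_singleton_eq_bot]
      exact he'0
    have hAB : A * B = ⊥ := by
      rw [hAdef, hBdef, Ideal.span_singleton_mul_span_singleton, hee',
        Ideal.span_singleton_eq_bot.2 rfl]
    have hAA : A * A = A := by
      rw [hAdef, Ideal.span_singleton_mul_span_singleton, hee]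
    have hBB : B * B = B := by
      rw [hBdef, Ideal.span_singleton_mul_span_singleton, he'e']
    have hABne : A ≠ B := by
      intro h
      have he'A : e' ∈ A := by rw [h, hBdef]; exact Ideal.mem_span_singleton_self e'
      obtain ⟨r, hr⟩ := Ideal.mem_span_singleton'.1 he'A
      apply he'0
      calc e' = e' * e' := he'e'.symm
        _ = (r * e) * e' := by rw [hr]
        _ = r * (e * e') := by ring
        _ = 0 := by rw [hee', mul_zero]
    rcases L0 A B hA0 hB0 hAB with h | h | h
    · apply hA0
      rw [← hAA, h, hc2]
    · apply hB0
      rw [← hBB, h, hc2]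
    · exact hABne h
  · -- Part 2: A_I(R) is complete
    -- the central lemma: no two distinct non-center vertices u, v can satisfy
    -- Ann(u*v) = Ann(u)
    have main : ∀ u v : AnnVert R, u ≠ c → v ≠ c → u ≠ v →
        Submodule.annihilator (u.1 * v.1) = Submodule.annihilator u.1 → False := by
      intro u v huc hvc huv hE
      set U : Ideal R := u.1 with hUdef
      set V : Ideal R := v.1 with hVdef
      have hU0 : U ≠ ⊥ := u.2.1
      have hV0 : V ≠ ⊥ := v.2.1
      have hUc : U ≠ c.1 := fun h => huc (Subtype.ext h)
      have hVc : V ≠ c.1 := fun h => hvc (Subtype.ext h)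
      have hUV : U ≠ V := fun h => huv (Subtype.ext h)
      have hUV0 : U * V ≠ ⊥ := hS2 U V hU0 hV0 hUc hVc hUV
      have hcU : c.1 * U = ⊥ := hS1 u huc
      have hcV : c.1 * V = ⊥ := hS1 v hvc
      -- key consequence of Ann(U*V) = Ann(U)
      have step : ∀ W : Ideal R, (U * V) * W = ⊥ → U * W = ⊥ := by
        intro W hW
        have h1 : W ≤ Submodule.annihilator (U * V) :=
          aux_mul_eq_bot_iff_le_ann.1 (by rw [mul_comm]; exact hW)
        rw [hE] at h1
        rw [mul_comm]
        exact aux_mul_eq_bot_iff_le_ann.2 h1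
      -- U*V ≠ c
      have hUVc : U * V ≠ c.1 := by
        intro h
        apply hUV0
        apply step V
        rw [h]
        exact hcV
      -- step 1: v ∈ {P, Q}
      have hvPQ : V = P ∨ V = Q := by
        by_contra hv
        push_neg at hv
        obtain ⟨hvP, hvQ⟩ := hv
        have hVP0 : V * P ≠ ⊥ := hS2 V P hV0 hP0 hVc hPc hvP
        have hVQ0 : V * Q ≠ ⊥ := hS2 V Q hV0 hQ0 hVc hQc hvQ
        have hVPQ : (V * P) * Q = ⊥ := by
          rw [mul_assoc, hPQ, mul_comm V c.1, hcV]
        have hVQP : (V * Q) * P = ⊥ := by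
          rw [mul_assoc, mul_comm Q P, hPQ, mul_comm V c.1, hcV]
        have hVP : V * P = c.1 ∨ V * P = Q := by
          rcases L0 (V * P) Q hVP0 hQ0 hVPQ with h | h | h
          · exact Or.inl h
          · exact absurd h hQc
          · exact Or.inr h
        have hVQ : V * Q = c.1 ∨ V * Q = P := by
          rcases L0 (V * Q) P hVQ0 hP0 hVQP with h | h | h
          · exact Or.inl h
          · exact absurd h hPc
          · exact Or.inr h
        rcases hVQ with hVQ | hVQ
        · -- V*Q = c ⇒ Q ≤ Ann(U*V) = Ann U ⇒ U*Q = ⊥ ⇒ U = Q ⇒ U*V = c, contra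
          have hQle : (U * V) * Q = ⊥ := by
            rw [mul_assoc, hVQ, mul_comm U c.1, hcU]
          have hUQ : U * Q = ⊥ := step Q hQle
          have : U = Q := by
            by_contra hUQne
            exact hS2 U Q hU0 hQ0 hUc hQc hUQne hUQ
          apply hUVc
          rw [this, mul_comm Q V, hVQ]
        rcases hVP with hVP | hVP
        · have hPle : (U * V) * P = ⊥ := by
            rw [mul_assoc, hVP, mul_comm U c.1, hcU]
          have hUP : U * P = ⊥ := step P hPle
          have : U = P := by
            by_contra hUPne
            exact hS2 U P hU0 hP0 hUc hPc hUPne hUP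
          apply hUVc
          rw [this, mul_comm P V, hVP]
        -- killed case: V*P = Q, V*Q = P
        have hP2 : P * P = ⊥ := by
          have h := hVQP
          rw [hVQ] at h
          exact h
        have hQ2 : Q * Q = ⊥ := by
          have h := hVPQ
          rw [hVP] at h
          exact h
        -- show V*P ≤ c
        have hVPle : V * P ≤ c.1 := by
          apply Ideal.mul_le.2
          intro a ha b hb
          set Aa : Ideal R := Ideal.span {a} * P with hAadef
          have hAaP : Aa * P = ⊥ := by
            rw [hAadef, mul_assoc, hP2, Ideal.mul_bot]
          by_cases hAa0 : Aa = ⊥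
          · have : a * b ∈ Aa :=
              Ideal.mul_mem_mul (Ideal.mem_span_singleton_self a) hb
            rw [hAa0] at this
            rw [Submodule.mem_bot] at this
            rw [this]
            exact (c.1).zero_mem
          · have hAale : Aa ≤ V * P := by
              rw [hAadef]
              apply Ideal.mul_mono_left
              rw [Ideal.span_le, Set.singleton_subset_iff]
              exact ha
            rcases L0 Aa P hAa0 hP0 hAaP with h | h | h
            · rw [← h]
              exact Ideal.mul_mem_mul (Ideal.mem_span_singleton_self a) hb
            · exact absurd h hPc
            · -- Aa = P ⇒ P ≤ V*P = Q ⇒ c = P*Q ≤ Q*Q = ⊥, contra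
              exfalso
              apply hc0
              have hPleQ : P ≤ Q := by
                have h4 : Aa ≤ Q := by rw [← hVP]; exact hAale
                rw [h] at h4
                exact h4
              rw [eq_bot_iff, ← hPQ, ← hQ2]
              exact Ideal.mul_mono_left hPleQ
          -- close
        -- then Q = V*P ≤ c, so P = V*Q ≤ V*c = ⊥, contra
        apply hP0
        rw [eq_bot_iff, ← hVQ]
        have h1 : Q ≤ c.1 := by rw [← hVP]; exact hVPle
        have h2 : V * Q ≤ V * c.1 := Ideal.mul_mono_right h1
        have h3 : V * c.1 = ⊥ := by rw [mul_comm]; exact hcV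
        exact le_trans h2 (le_of_eq h3)
      -- step 2: u ∉ {P, Q}, then contradictions
      have huP : U ≠ P := by
        intro h
        rcases hvPQ with h2 | h2
        · exact hUV (h.trans h2.symm)
        · apply hUVc
          rw [h, h2, hPQ]
      have huQ : U ≠ Q := by
        intro h
        rcases hvPQ with h2 | h2
        · apply hUVc
          rw [h, h2, mul_comm, hPQ]
        · exact hUV (h.trans h2.symm)
      have hUP0 : U * P ≠ ⊥ := hS2 U P hU0 hP0 hUc hPc huP
      have hUPQ : (U * P) * Q = ⊥ := by
        rw [mul_assoc, hPQ, mul_comm U c.1, hcU]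
      have hUPcases : U * P = c.1 ∨ U * P = Q := by
        rcases L0 (U * P) Q hUP0 hQ0 hUPQ with h | h | h
        · exact Or.inl h
        · exact absurd h hQc
        · exact Or.inr h
      rcases hUPcases with hUP | hUP
      · -- U*P = c ⇒ P ≤ Ann(U*V) = Ann U ⇒ U*P = ⊥, contra
        have hPle : (U * V) * P = ⊥ := by
          rw [mul_comm U V, mul_assoc, hUP, mul_comm V c.1, hcV]
        have : U * P = ⊥ := step P hPle
        rw [hUP] at this
        exact hc0 this
      · -- U*P = Q
        have hQ2 : Q * Q = ⊥ := by
          have h := hUPQ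
          rw [hUP] at h
          exact h
        rcases hvPQ with hv | hv
        · -- v = P: U*V = Q, and (U*V)*Q = Q*Q = ⊥ ⇒ U*Q = ⊥, contra
          have hQle : (U * V) * Q = ⊥ := by
            rw [hv, hUP]
            exact hQ2
          have hUQbot : U * Q = ⊥ := step Q hQle
          exact hS2 U Q hU0 hQ0 hUc hQc huQ hUQbot
        · -- v = Q: (U*V)*Q = U*(Q*Q) = ⊥ ⇒ U*Q = ⊥, contra
          have hQle : (U * V) * Q = ⊥ := by
            rw [hv, mul_assoc, hQ2, Ideal.mul_bot]
          have hUQbot : U * Q = ⊥ := step Q hQle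
          exact hS2 U Q hU0 hQ0 hUc hQc huQ hUQbot
    -- now assemble completeness
    intro Iv Jv hIJv
    by_cases hic2 : Iv = c
    · subst hic2
      have hJc2 : Jv ≠ Iv := fun h => hIJv h.symm
      exact aux_AG_le_AI ⟨hIJv, hS1 Jv hJc2⟩
    by_cases hjc2 : Jv = c
    · subst hjc2
      exact aux_AG_le_AI ⟨hIJv, by rw [mul_comm]; exact hS1 Iv hic2⟩
    refine ⟨hIJv, ?_⟩
    intro heq
    -- comparability of the annihilators
    have hcomp : Submodule.annihilator Jv.1 ≤ Submodule.annihilator Iv.1 ∨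
        Submodule.annihilator Iv.1 ≤ Submodule.annihilator Jv.1 := by
      by_contra hcomp
      push_neg at hcomp
      obtain ⟨h1, h2⟩ := hcomp
      obtain ⟨b, hb1, hb2⟩ := SetLike.not_le_iff_exists.1 h1
      obtain ⟨a, ha1, ha2⟩ := SetLike.not_le_iff_exists.1 h2
      have hab : a + b ∈ Submodule.annihilator (Iv.1 * Jv.1) := by
        apply Submodule.add_mem
        · exact Submodule.annihilator_mono Ideal.mul_le_left ha1
        · exact Submodule.annihilator_mono Ideal.mul_le_right hb1
      have : a + b ∈ (↑(Submodule.annihilator Iv.1) ∪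
          ↑(Submodule.annihilator Jv.1) : Set R) := by
        rw [← heq]
        exact hab
      rcases this with h | h
      · apply hb2
        have : (a + b) - a ∈ Submodule.annihilator Iv.1 := Submodule.sub_mem _ h ha1
        simpa using this
      · apply ha2
        have : (a + b) - b ∈ Submodule.annihilator Jv.1 := Submodule.sub_mem _ h hb1
        simpa using this
    rcases hcomp with hle | hle
    · -- union = Ann Iv, so Ann(Iv*Jv) = Ann Iv
      have hunion_eq : (↑(Submodule.annihilator Iv.1) ∪
          ↑(Submodule.annihilator Jv.1) : Set R) = ↑(Submodule.annihilator Iv.1) := by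
        apply Set.union_eq_self_of_subset_right
        exact hle
      rw [hunion_eq] at heq
      exact main Iv Jv hic2 hjc2 hIJv (SetLike.coe_injective heq)
    · have hunion_eq : (↑(Submodule.annihilator Iv.1) ∪
          ↑(Submodule.annihilator Jv.1) : Set R) = ↑(Submodule.annihilator Jv.1) := by
        apply Set.union_eq_self_of_subset_left
        exact hle
      rw [hunion_eq] at heq
      apply main Jv Iv hjc2 hic2 (fun h => hIJv h.symm)
      rw [mul_comm]
      exact SetLike.coe_injective heq
end

section
/- Let R be an Artinian commutative ring with identity which is not an integral domain, and suppose the annihilating-ideal graph 𝔸𝔾(R) is a star graph. Then the annihilator-ideal graph A_I(R) is a complete graph. -/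
section Stmt19Aux

variable {R : Type*} [CommRing R]

private lemma stmt19_annTop : (⊤ : Ideal R).annihilator = ⊥ := by
  rw [eq_bot_iff]
  intro r hr
  rw [Submodule.mem_annihilator] at hr
  simpa using hr 1 trivial

private lemma stmt19_mul_bot (X Y : Ideal R) : X * Y = ⊥ ↔ Y ≤ X.annihilator := by
  constructor
  · intro h y hy
    rw [Submodule.mem_annihilator]
    intro n hn
    have hmem : n * y ∈ X * Y := Ideal.mul_mem_mul hn hy
    rw [h] at hmem
    simpa [smul_eq_mul, mul_comm] using hmem
  · intro h
    rw [eq_bot_iff]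
    refine Ideal.mul_le.2 fun r hr s hs => ?_
    have := (Submodule.mem_annihilator).1 (h hs) r hr
    simpa [smul_eq_mul, mul_comm] using this

private lemma stmt19_le_ann_ann (X : Ideal R) : X ≤ X.annihilator.annihilator := by
  intro x hx
  rw [Submodule.mem_annihilator]
  intro n hn
  have := Submodule.mem_annihilator.1 hn x hx
  simpa [smul_eq_mul, mul_comm] using this

/-- The "neighbor rule": under (S2), the annihilator of a non-center vertex is the
center or the vertex itself. -/
private lemma stmt19_lemN (c L : Ideal R)
    (s2 : ∀ L₁ L₂ : Ideal R, L₁ ≠ ⊥ → L₁.annihilator ≠ ⊥ → L₂ ≠ ⊥ → L₂.annihilator ≠ ⊥ →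
      L₁ ≠ L₂ → L₁ ≠ c → L₂ ≠ c → L₁ * L₂ ≠ ⊥)
    (hL0 : L ≠ ⊥) (hLann : L.annihilator ≠ ⊥) (hLc : L ≠ c) :
    L.annihilator = c ∨ L.annihilator = L := by
  by_contra h
  push_neg at h
  obtain ⟨hac, haL⟩ := h
  have hAA : L.annihilator.annihilator ≠ ⊥ := by
    intro hb
    have := stmt19_le_ann_ann L
    rw [hb] at this
    exact hL0 (le_bot_iff.1 this)
  exact s2 L.annihilator L hLann hAA hL0 hLann haL hac hLc
    ((stmt19_mul_bot L.annihilator L).2 (stmt19_le_ann_ann L))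

private lemma stmt19_exists_minimal [IsArtinianRing R] (X : Ideal R) (hX : X ≠ ⊥) :
    ∃ M : Ideal R, M ≤ X ∧ M ≠ ⊥ ∧ ∀ L : Ideal R, L ≤ M → L ≠ ⊥ → L = M := by
  obtain ⟨M, hM, hmin⟩ := IsArtinian.set_has_minimal
    {L : Ideal R | L ≤ X ∧ L ≠ ⊥} ⟨X, le_rfl, hX⟩
  refine ⟨M, hM.1, hM.2, fun L hLM hL0 => ?_⟩
  have : ¬ L < M := hmin L ⟨hLM.trans hM.1, hL0⟩
  exact hLM.lt_or_eq.resolve_left this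

private lemma stmt19_min_fg (M : Ideal R) (hM0 : M ≠ ⊥)
    (hmin : ∀ L : Ideal R, L ≤ M → L ≠ ⊥ → L = M) : M.FG := by
  obtain ⟨x, hxM, hx0⟩ := (Submodule.ne_bot_iff M).1 hM0
  have hsle : Ideal.span {x} ≤ M := Ideal.span_le.2 (Set.singleton_subset_iff.2 hxM)
  have hs0 : Ideal.span {x} ≠ ⊥ := by rwa [Ne, Ideal.span_singleton_eq_bot]
  have := hmin _ hsle hs0
  rw [← this]
  exact Submodule.fg_span_singleton x

/-- Nakayama-type conclusion for finitely generated ideals. -/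
private lemma stmt19_nak (X Y : Ideal R) (hfg : X.FG) (h : X * Y = X) :
    (1 : R) ∈ X.annihilator ⊔ Y := by
  have hle : X ≤ Y • X := by
    rw [Ideal.smul_eq_mul, mul_comm, h]
  obtain ⟨r, hr1, hr2⟩ :=
    Submodule.exists_sub_one_mem_and_smul_eq_zero_of_fg_of_le_smul Y X hfg hle
  have hrann : r ∈ X.annihilator := Submodule.mem_annihilator.2 hr2
  have h1 : (1 : R) = r - (r - 1) := by ring
  rw [h1]
  exact Submodule.sub_mem _ (Submodule.mem_sup_left hrann) (Submodule.mem_sup_right hr1)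

/-- Descending chain `W * Y^n`: either some nonzero tail is `Y`-stable, or the chain
reaches `⊥` and we can look at the last nonzero term. -/
private lemma stmt19_chain [IsArtinianRing R] (W Y : Ideal R) (hW : W ≠ ⊥) :
    (∃ Z : Ideal R, Z ≠ ⊥ ∧ Z ≤ W ∧ Z * Y = Z) ∨
    (∃ P : Ideal R, P ≠ ⊥ ∧ P * Y = ⊥ ∧
      (P = W ∨ ∃ Q : Ideal R, Q ≠ ⊥ ∧ Q ≤ W ∧ Q * Y = P)) := by
  classical
  set f : ℕ → Ideal R := fun n => W * Y ^ n with hf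
  have hf0 : f 0 = W := by simp [hf]
  have hfs : ∀ n, f (n + 1) = f n * Y := by
    intro n
    simp only [hf, pow_succ, ← mul_assoc]
  have hfW : ∀ n, f n ≤ W := fun n => Ideal.mul_le_left
  by_cases hbot : ∃ n, f n = ⊥
  · right
    set n := Nat.find hbot with hn_def
    have hn : f n = ⊥ := Nat.find_spec hbot
    have hn0 : n ≠ 0 := by
      intro h
      rw [h, hf0] at hn
      exact hW hn
    have hpos : 0 < n := Nat.pos_of_ne_zero hn0
    refine ⟨f (n - 1), ?_, ?_, ?_⟩
    · exact Nat.find_min hbot (Nat.sub_lt hpos one_pos)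
    · have h1 := hfs (n - 1)
      rw [show n - 1 + 1 = n by omega] at h1
      rw [← h1]
      exact hn
    · rcases eq_or_ne n 1 with h1 | h1
      · left
        rw [h1]
        exact hf0
      · right
        have h2 : 2 ≤ n := by omega
        refine ⟨f (n - 2), ?_, hfW _, ?_⟩
        · exact Nat.find_min hbot (by omega)
        · have h3 := hfs (n - 2)
          rw [show n - 2 + 1 = n - 1 by omega] at h3
          exact h3.symm
  · left
    push_neg at hbot
    obtain ⟨Z, hZmem, hmin⟩ := IsArtinian.set_has_minimal (Set.range f) ⟨f 0, 0, rfl⟩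
    obtain ⟨n, rfl⟩ := hZmem
    refine ⟨f n, hbot n, hfW n, ?_⟩
    have hle : f (n + 1) ≤ f n := by
      rw [hfs n]
      exact Ideal.mul_le_left
    have hnlt : ¬ f (n + 1) < f n := hmin _ ⟨n + 1, rfl⟩
    have heq : f (n + 1) = f n := hle.lt_or_eq.resolve_left hnlt
    exact (hfs n).symm.trans heq

/-- The core contradiction: in a star annihilating-ideal graph (data `c`, `s1`, `s2`),
two distinct vertices `I`, `J` cannot satisfy `Ann J ≤ Ann I` and `Ann (I*J) = Ann I`. -/
private lemma stmt19_core [IsArtinianRing R]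
    (c I J : Ideal R)
    (hc0 : c ≠ ⊥)
    (hI0 : I ≠ ⊥) (hIann : I.annihilator ≠ ⊥)
    (hJ0 : J ≠ ⊥) (hJann : J.annihilator ≠ ⊥)
    (s1 : ∀ L : Ideal R, L ≠ ⊥ → L.annihilator ≠ ⊥ → L ≠ c → c * L = ⊥)
    (s2 : ∀ L₁ L₂ : Ideal R, L₁ ≠ ⊥ → L₁.annihilator ≠ ⊥ → L₂ ≠ ⊥ → L₂.annihilator ≠ ⊥ →
      L₁ ≠ L₂ → L₁ ≠ c → L₂ ≠ c → L₁ * L₂ ≠ ⊥)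
    (hIJ : I ≠ J)
    (h1 : J.annihilator ≤ I.annihilator)
    (h2 : (I * J).annihilator = I.annihilator) : False := by
  obtain ⟨K, hKdef⟩ : ∃ K : Ideal R, K = I * J := ⟨_, rfl⟩
  rw [← hKdef] at h2
  -- Step 0 : K ≠ ⊥
  have hK0 : K ≠ ⊥ := by
    intro h
    rw [h, Submodule.annihilator_bot] at h2
    exact hI0 (Submodule.annihilator_eq_top_iff.1 h2.symm)
  -- I ≠ c and J ≠ c
  have hIc : I ≠ c := by
    intro h
    have hJc : J ≠ c := fun h' => hIJ (h.trans h'.symm)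
    have := s1 J hJ0 hJann hJc
    rw [← h] at this
    exact hK0 (hKdef.trans this)
  have hJc : J ≠ c := by
    intro h
    have := s1 I hI0 hIann hIc
    rw [← h, mul_comm] at this
    exact hK0 (hKdef.trans this)
  -- Ann J = c
  have n3 : J.annihilator = c := by
    rcases stmt19_lemN c J s2 hJ0 hJann hJc with h | h
    · exact h
    · exfalso
      apply hK0
      rw [hKdef, stmt19_mul_bot]
      exact le_trans (le_of_eq h.symm) h1
  have hcJ : c * J = ⊥ := by
    rw [mul_comm, stmt19_mul_bot]
    exact le_of_eq n3.symm
  have hcI : c * I = ⊥ := by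
    rw [mul_comm, stmt19_mul_bot]
    exact le_trans (le_of_eq n3.symm) h1
  rcases stmt19_lemN c I s2 hI0 hIann hIc with hAIc | hAII
  · -- CASE A (corner): Ann I = c
    have hannK : K.annihilator = c := h2.trans hAIc
    obtain ⟨A, hAdef⟩ : ∃ A : Ideal R, A = c.annihilator := ⟨_, rfl⟩
    have hcA : c * A = ⊥ := (stmt19_mul_bot c A).2 (le_of_eq hAdef)
    have hIA : I ≤ A := by rw [hAdef]; exact (stmt19_mul_bot c I).1 hcI
    have hJA : J ≤ A := by rw [hAdef]; exact (stmt19_mul_bot c J).1 hcJ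
    have hA0 : A ≠ ⊥ := by
      intro h
      rw [h] at hIA
      exact hI0 (le_bot_iff.1 hIA)
    by_cases hAc : A = c
    · apply hK0
      have hIle : I ≤ c := by rw [← hAc]; exact hIA
      rw [hKdef, eq_bot_iff]
      exact (Ideal.mul_mono_left hIle).trans (le_of_eq hcJ)
    have hAann : A.annihilator ≠ ⊥ := by
      intro h
      have := stmt19_le_ann_ann c
      rw [← hAdef, h] at this
      exact hc0 (le_bot_iff.1 this)
    have nAA : A.annihilator = c := by
      rcases stmt19_lemN c A s2 hA0 hAann hAc with h | h
      · exact h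
      · exfalso
        apply hK0
        have hAA : A * A = ⊥ := (stmt19_mul_bot A A).2 (le_of_eq h.symm)
        rw [hKdef, eq_bot_iff]
        exact (Ideal.mul_mono hIA hJA).trans (le_of_eq hAA)
    have hKc : K ≠ c := by
      intro h
      apply hAc
      rw [hAdef]
      exact h ▸ hannK
    have hKA : K ≤ A := le_trans (by rw [hKdef]; exact Ideal.mul_le_left) hIA
    have hKann : K.annihilator ≠ ⊥ := fun h => hc0 (hannK.symm.trans h)
    -- minimal M ≤ K
    obtain ⟨M, hMK, hM0, hMmin⟩ := stmt19_exists_minimal K hK0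
    have hMann : M.annihilator ≠ ⊥ := by
      intro h
      have := Submodule.annihilator_mono hMK
      rw [h] at this
      exact hKann (le_bot_iff.1 this)
    have hMA : M ≤ A := hMK.trans hKA
    have hMIcase : M * I = ⊥ ∨ M * I = M := by
      rcases eq_or_ne (M * I) ⊥ with h | h
      · exact Or.inl h
      · exact Or.inr (hMmin _ Ideal.mul_le_left h)
    rcases hMIcase with hMI0 | hMIM
    · by_cases hMc : M = c
      · -- [α] : c is minimal and c ≤ K
        have hcK : c ≤ K := by rw [← hMc]; exact hMK
        have cmin : ∀ L : Ideal R, L ≤ c → L ≠ ⊥ → L = c := by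
          intro L hL h0
          exact (hMmin L (by rw [hMc]; exact hL) h0).trans hMc
        have hKmulc : K * c = ⊥ := (stmt19_mul_bot K c).2 (le_of_eq hannK.symm)
        have hccA : c ≤ A := by
          have hcc : c * c = ⊥ := by
            rw [eq_bot_iff]
            exact (Ideal.mul_mono_left hcK).trans (le_of_eq hKmulc)
          rw [hAdef]
          exact (stmt19_mul_bot c c).1 hcc
        -- The Q-analysis
        have Qanal : ∀ Q : Ideal R, Q ≠ ⊥ → Q ≤ I → Q * A = c → False := by
          intro Q hQ0 hQI hQA
          have hQA' : Q ≤ A := hQI.trans hIA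
          have hQc0 : Q * c = ⊥ := by
            rw [mul_comm, eq_bot_iff]
            exact (Ideal.mul_mono_right hQA').trans (le_of_eq hcA)
          have hcAnnQ : c ≤ Q.annihilator := (stmt19_mul_bot Q c).1 hQc0
          have hQann : Q.annihilator ≠ ⊥ := by
            intro h
            rw [h] at hcAnnQ
            exact hc0 (le_bot_iff.1 hcAnnQ)
          have hQc : Q ≠ c := by
            intro h
            rw [h, hcA] at hQA
            exact hc0 hQA.symm
          have hQIle : Q * I ≤ c := (Ideal.mul_mono_right hIA).trans (le_of_eq hQA)
          have hQIcase : Q * I = ⊥ ∨ Q * I = c := by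
            rcases eq_or_ne (Q * I) ⊥ with h | h
            · exact Or.inl h
            · exact Or.inr (cmin _ hQIle h)
          have hQJle : Q * J ≤ c := (Ideal.mul_mono_right hJA).trans (le_of_eq hQA)
          have hQJcase : Q * J = ⊥ ∨ Q * J = c := by
            rcases eq_or_ne (Q * J) ⊥ with h | h
            · exact Or.inl h
            · exact Or.inr (cmin _ hQJle h)
          rcases stmt19_lemN c Q s2 hQ0 hQann hQc with hAQ | hAQ
          · -- Ann Q = c
            rcases hQIcase with h | hQIc
            · have : I ≤ c := by rw [← hAQ]; exact (stmt19_mul_bot Q I).1 h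
              exact hIc (cmin I this hI0)
            rcases hQJcase with h | hQJc
            · have : J ≤ c := by rw [← hAQ]; exact (stmt19_mul_bot Q J).1 h
              exact hJc (cmin J this hJ0)
            have hQK : Q * K = ⊥ := by
              rw [hKdef, ← mul_assoc, hQIc, hcJ]
            have : K ≤ c := by rw [← hAQ]; exact (stmt19_mul_bot Q K).1 hQK
            exact hKc (cmin K this hK0)
          · -- Ann Q = Q
            rcases hQIcase with h | hQIc
            · have hIQ : I ≤ Q := by rw [← hAQ]; exact (stmt19_mul_bot Q I).1 h
              have hQI' : Q = I := le_antisymm hQI hIQ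
              have hII0 : I * I = ⊥ := hQI' ▸ h
              have : I ≤ c := by rw [← hAIc]; exact (stmt19_mul_bot I I).1 hII0
              exact hIc (cmin I this hI0)
            have hQK : Q * K = ⊥ := by
              rw [hKdef, ← mul_assoc, hQIc, hcJ]
            have hKQ : K ≤ Q := by rw [← hAQ]; exact (stmt19_mul_bot Q K).1 hQK
            by_cases hKQ' : K = Q
            · have hQQ0 : Q * Q = ⊥ := (stmt19_mul_bot Q Q).2 (le_of_eq hAQ.symm)
              have hKK : K * K = ⊥ := by rw [hKQ']; exact hQQ0
              have : K ≤ c := by rw [← hannK]; exact (stmt19_mul_bot K K).1 hKK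
              exact hKc (cmin K this hK0)
            · exact s2 K Q hK0 hKann hQ0 hQann hKQ' hKc hQc (by rw [mul_comm]; exact hQK)
        -- Now produce a suitable Q (or a principal Y-stable ideal) via chains
        by_cases hT : ∃ Z : Ideal R, Z ≠ ⊥ ∧ Z ≤ I ∧ Z * A = Z
        · obtain ⟨Z₀, hZ₀mem, hZ₀min⟩ := IsArtinian.set_has_minimal
            {Z : Ideal R | Z ≠ ⊥ ∧ Z ≤ I ∧ Z * A = Z} hT
          obtain ⟨hZ0, hZI, hZA⟩ := hZ₀mem
          have hZc : Z₀ ≠ c := by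
            intro h
            rw [h, hcA] at hZA
            exact hc0 hZA.symm
          have hxe : ∃ x ∈ Z₀, x ∉ c := by
            by_contra h
            push_neg at h
            exact hZc (cmin Z₀ h hZ0)
          obtain ⟨x, hxZ, hxc⟩ := hxe
          have hx0 : x ≠ 0 := fun h => hxc (h ▸ c.zero_mem)
          obtain ⟨W, hWdef⟩ : ∃ W : Ideal R, W = Ideal.span {x} := ⟨_, rfl⟩
          have hW0 : W ≠ ⊥ := by rwa [hWdef, Ne, Ideal.span_singleton_eq_bot]
          have hWZ : W ≤ Z₀ := by
            rw [hWdef]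
            exact Ideal.span_le.2 (Set.singleton_subset_iff.2 hxZ)
          rcases stmt19_chain W A hW0 with ⟨Z, hZ0', hZW, hZA'⟩ | ⟨P, hP0, hPA, hPcase⟩
          · have hZle : Z ≤ Z₀ := hZW.trans hWZ
            have hnlt : ¬ Z < Z₀ := hZ₀min Z ⟨hZ0', hZle.trans hZI, hZA'⟩
            have hZeq : Z = Z₀ := hZle.lt_or_eq.resolve_left hnlt
            have hZ₀W : Z₀ = W := le_antisymm (by rw [← hZeq]; exact hZW) hWZ
            have hfg : Z₀.FG := by rw [hZ₀W, hWdef]; exact Submodule.fg_span_singleton x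
            have hZ₀A : Z₀ * A = Z₀ := hZA
            have hone := stmt19_nak Z₀ A hfg hZ₀A
            have hZ₀c0 : Z₀ * c = ⊥ := by
              rw [mul_comm, eq_bot_iff]
              exact (Ideal.mul_mono_right (hZI.trans hIA)).trans (le_of_eq hcA)
            have hZ₀ann : Z₀.annihilator ≠ ⊥ := by
              intro h
              have := (stmt19_mul_bot Z₀ c).1 hZ₀c0
              rw [h] at this
              exact hc0 (le_bot_iff.1 this)
            have hAnnle : Z₀.annihilator ≤ A := by
              rcases stmt19_lemN c Z₀ s2 hZ0 hZ₀ann hZc with h | h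
              · rw [h]; exact hccA
              · rw [h]; exact hZI.trans hIA
            have h1A : (1 : R) ∈ A := (sup_le hAnnle le_rfl) hone
            have hAtop : A = ⊤ := (Ideal.eq_top_iff_one A).2 h1A
            rw [hAtop, stmt19_annTop] at nAA
            exact hc0 nAA.symm
          · have hPc : P ≤ c := by rw [← nAA]; exact (stmt19_mul_bot A P).1 (by rw [mul_comm]; exact hPA)
            have hPeqc : P = c := cmin P hPc hP0
            rcases hPcase with hPW | ⟨Q, hQ0, hQW, hQA⟩
            · apply hxc
              rw [← hPeqc, hPW, hWdef]
              exact Ideal.subset_span (Set.mem_singleton x)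
            · exact Qanal Q hQ0 (hQW.trans (hWZ.trans hZI)) (hQA.trans hPeqc)
        · rcases stmt19_chain I A hI0 with ⟨Z, hZ0', hZI', hZA'⟩ | ⟨P, hP0, hPA, hPcase⟩
          · exact hT ⟨Z, hZ0', hZI', hZA'⟩
          · have hPc : P ≤ c := by rw [← nAA]; exact (stmt19_mul_bot A P).1 (by rw [mul_comm]; exact hPA)
            have hPeqc : P = c := cmin P hPc hP0
            rcases hPcase with rfl | ⟨Q, hQ0, hQI, hQA⟩
            · exact hIc hPeqc
            · exact Qanal Q hQ0 hQI (hQA.trans hPeqc)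
      · by_cases hMI' : M = I
        · apply hK0
          have hII0 : I * I = ⊥ := hMI' ▸ hMI0
          have hIle : I ≤ c := by rw [← hAIc]; exact (stmt19_mul_bot I I).1 hII0
          rw [hKdef, eq_bot_iff]
          exact (Ideal.mul_mono_left hIle).trans (le_of_eq hcJ)
        · exact s2 M I hM0 hMann hI0 hIann hMI' hMc hIc hMI0
    · -- M * I = M
      have hMc : M ≠ c := by
        intro h
        apply hM0
        rw [← hMIM, h, hcI]
      have hfg : M.FG := stmt19_min_fg M hM0 hMmin
      rcases stmt19_lemN c M s2 hM0 hMann hMc with hAM | hAM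
      · -- Ann M = c
        have hone := stmt19_nak M I hfg hMIM
        rw [hAM] at hone
        have htop : c ⊔ I = ⊤ := (Ideal.eq_top_iff_one _).2 hone
        have hAI : A = I := by
          have hcalc : A = A * I := by
            calc A = A * ⊤ := (Ideal.mul_top A).symm
            _ = A * (c ⊔ I) := by rw [htop]
            _ = A * c ⊔ A * I := Ideal.mul_sup A c I
            _ = A * I := by rw [mul_comm A c, hcA, bot_sup_eq]
          exact le_antisymm (by rw [hcalc]; exact Ideal.mul_le_right) hIA
        have hMJcase : M * J = ⊥ ∨ M * J = M := by
          rcases eq_or_ne (M * J) ⊥ with h | h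
          · exact Or.inl h
          · exact Or.inr (hMmin _ Ideal.mul_le_left h)
        rcases hMJcase with hMJ0 | hMJM
        · by_cases hMJ' : M = J
          · apply hK0
            have hJJ0 : J * J = ⊥ := hMJ' ▸ hMJ0
            have hJle : J ≤ c := by rw [← n3]; exact (stmt19_mul_bot J J).1 hJJ0
            rw [hKdef, eq_bot_iff]
            exact (Ideal.mul_mono_right hJle).trans (le_of_eq (by rw [mul_comm]; exact hcI))
          · exact s2 M J hM0 hMann hJ0 hJann hMJ' hMc hJc hMJ0
        · have hone2 := stmt19_nak M J hfg hMJM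
          rw [hAM] at hone2
          have htop2 : c ⊔ J = ⊤ := (Ideal.eq_top_iff_one _).2 hone2
          have hAJ : A = J := by
            have hcalc : A = A * J := by
              calc A = A * ⊤ := (Ideal.mul_top A).symm
              _ = A * (c ⊔ J) := by rw [htop2]
              _ = A * c ⊔ A * J := Ideal.mul_sup A c J
              _ = A * J := by rw [mul_comm A c, hcA, bot_sup_eq]
            exact le_antisymm (by rw [hcalc]; exact Ideal.mul_le_right) hJA
          exact hIJ (hAI.symm.trans hAJ)
      · -- Ann M = M
        have hone := stmt19_nak M I hfg hMIM
        rw [hAM] at hone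
        have h1A : (1 : R) ∈ A := (sup_le hMA hIA) hone
        have hAtop : A = ⊤ := (Ideal.eq_top_iff_one A).2 h1A
        rw [hAtop, stmt19_annTop] at nAA
        exact hc0 nAA.symm
  · -- CASE B : Ann I = I
    have hII : I * I = ⊥ := (stmt19_mul_bot I I).2 (le_of_eq hAII.symm)
    by_cases hKIeq : K = I
    · -- I = I * J
      have hIleJ : I ≤ J := by rw [← hKIeq, hKdef]; exact Ideal.mul_le_right
      obtain ⟨M, hMI, hM0, hMmin⟩ := stmt19_exists_minimal I hI0
      have hMann : M.annihilator ≠ ⊥ := by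
        intro h
        have := Submodule.annihilator_mono hMI
        rw [h] at this
        exact hIann (le_bot_iff.1 this)
      have hMI0 : M * I = ⊥ := by
        rw [eq_bot_iff]
        exact (Ideal.mul_mono_left hMI).trans (le_of_eq hII)
      by_cases hMI' : M = I
      · -- I minimal, I * J = I : Nakayama
        have hfg : I.FG := hMI' ▸ stmt19_min_fg M hM0 hMmin
        have hImulJ : I * J = I := by rw [← hKdef]; exact hKIeq
        have hone := stmt19_nak I J hfg hImulJ
        rw [hAII] at hone
        have h1J : (1 : R) ∈ J := (sup_le hIleJ le_rfl) hone
        apply hJann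
        rw [(Ideal.eq_top_iff_one J).2 h1J, stmt19_annTop]
      · by_cases hMc : M = c
        · -- c is minimal; chain argument with J
          have cmin : ∀ L : Ideal R, L ≤ c → L ≠ ⊥ → L = c := by
            intro L hL h0
            exact (hMmin L (by rw [hMc]; exact hL) h0).trans hMc
          have hImulJ : I * J = I := by rw [← hKdef]; exact hKIeq
          obtain ⟨Z₀, hZ₀mem, hZ₀min⟩ := IsArtinian.set_has_minimal
            {Z : Ideal R | Z ≠ ⊥ ∧ Z ≤ I ∧ Z * J = Z} ⟨I, hI0, le_rfl, hImulJ⟩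
          obtain ⟨hZ0, hZI, hZJ⟩ := hZ₀mem
          have hZc : Z₀ ≠ c := by
            intro h
            rw [h, hcJ] at hZJ
            exact hc0 hZJ.symm
          have hxe : ∃ x ∈ Z₀, x ∉ c := by
            by_contra h
            push_neg at h
            exact hZc (cmin Z₀ h hZ0)
          obtain ⟨x, hxZ, hxc⟩ := hxe
          obtain ⟨W, hWdef⟩ : ∃ W : Ideal R, W = Ideal.span {x} := ⟨_, rfl⟩
          have hx0 : x ≠ 0 := fun h => hxc (h ▸ c.zero_mem)
          have hW0 : W ≠ ⊥ := by rwa [hWdef, Ne, Ideal.span_singleton_eq_bot]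
          have hWZ : W ≤ Z₀ := by
            rw [hWdef]
            exact Ideal.span_le.2 (Set.singleton_subset_iff.2 hxZ)
          rcases stmt19_chain W J hW0 with ⟨Z, hZ0', hZW, hZJ'⟩ | ⟨P, hP0, hPJ, hPcase⟩
          · have hZle : Z ≤ Z₀ := hZW.trans hWZ
            have hnlt : ¬ Z < Z₀ := hZ₀min Z ⟨hZ0', hZle.trans hZI, hZJ'⟩
            have hZeq : Z = Z₀ := hZle.lt_or_eq.resolve_left hnlt
            have hZ₀W : Z₀ = W := le_antisymm (by rw [← hZeq]; exact hZW) hWZ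
            have hfg : Z₀.FG := by rw [hZ₀W, hWdef]; exact Submodule.fg_span_singleton x
            have hZ₀J : Z₀ * J = Z₀ := hZJ
            have hZ₀ann : Z₀.annihilator ≠ ⊥ := by
              intro h
              have := Submodule.annihilator_mono hZI
              rw [h] at this
              exact hIann (le_bot_iff.1 this)
            rcases stmt19_lemN c Z₀ s2 hZ0 hZ₀ann hZc with h | h
            · -- Ann Z₀ = c : Z₀² = ⊥ so Z₀ ≤ c, contra
              have hZZ : Z₀ * Z₀ = ⊥ := by
                rw [eq_bot_iff]
                exact (Ideal.mul_mono hZI hZI).trans (le_of_eq hII)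
              have : Z₀ ≤ c := by rw [← h]; exact (stmt19_mul_bot Z₀ Z₀).1 hZZ
              exact hZc (cmin Z₀ this hZ0)
            · have hone := stmt19_nak Z₀ J hfg hZ₀J
              rw [h] at hone
              have h1J : (1 : R) ∈ J := (sup_le (hZI.trans hIleJ) le_rfl) hone
              apply hJann
              rw [(Ideal.eq_top_iff_one J).2 h1J, stmt19_annTop]
          · have hPc : P ≤ c := by
              rw [← n3]
              exact (stmt19_mul_bot J P).1 (by rw [mul_comm]; exact hPJ)
            have hPeqc : P = c := cmin P hPc hP0
            rcases hPcase with hPW | ⟨Q, hQ0, hQW, hQJ⟩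
            · apply hxc
              rw [← hPeqc, hPW, hWdef]
              exact Ideal.subset_span (Set.mem_singleton x)
            · have hQI : Q ≤ I := hQW.trans (hWZ.trans hZI)
              have hQJc : Q * J = c := hQJ.trans hPeqc
              have hQann : Q.annihilator ≠ ⊥ := by
                intro h
                have := Submodule.annihilator_mono hQI
                rw [h] at this
                exact hIann (le_bot_iff.1 this)
              have hQc : Q ≠ c := by
                intro h
                rw [h, hcJ] at hQJc
                exact hc0 hQJc.symm
              have hQQ : Q * Q = ⊥ := by
                rw [eq_bot_iff]
                exact (Ideal.mul_mono hQI hQI).trans (le_of_eq hII)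
              rcases stmt19_lemN c Q s2 hQ0 hQann hQc with h | h
              · have : Q ≤ c := by rw [← h]; exact (stmt19_mul_bot Q Q).1 hQQ
                exact hQc (cmin Q this hQ0)
              · by_cases hQI' : Q = I
                · apply hIc
                  rw [← hQJc, hQI', ← hKdef]
                  exact hKIeq.symm
                · have hQI0 : Q * I = ⊥ := by
                    rw [eq_bot_iff]
                    exact (Ideal.mul_mono_left hQI).trans (le_of_eq hII)
                  exact s2 Q I hQ0 hQann hI0 hIann hQI' hQc hIc hQI0
        · exact s2 M I hM0 hMann hI0 hIann hMI' hMc hIc hMI0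
    · -- K ≠ I
      by_cases hKc : K = c
      · have hAnnc : c.annihilator = I := by rw [← hKc, h2, hAII]
        have hJI : J ≤ I := by rw [← hAnnc]; exact (stmt19_mul_bot c J).1 hcJ
        apply hK0
        rw [hKdef, eq_bot_iff]
        exact (Ideal.mul_mono_right hJI).trans (le_of_eq hII)
      · have hKI0 : K * I = ⊥ := by
          rw [eq_bot_iff]
          exact (Ideal.mul_mono_left (by rw [hKdef]; exact Ideal.mul_le_left)).trans
            (le_of_eq hII)
        have hKann : K.annihilator ≠ ⊥ := fun h => hIann (h2.symm.trans h)
        exact s2 K I hK0 hKann hI0 hIann hKIeq hKc hIc hKI0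

end Stmt19Aux

theorem stmt19 (R : Type*) [CommRing R] [Nontrivial R] (hdom : ¬IsDomain R)
    [IsArtinianRing R]
    (hstar : (annihilatingIdealGraph R).IsStarGraph) :
    ∀ I J : AnnVert R, I ≠ J → (annihilatorIdealGraph R).Adj I J := by
  intro I J hIJ
  obtain ⟨c, t, -, hdisj, huniv, hadj⟩ := hstar
  have hct : c ∉ t := by
    intro h
    exact (Set.disjoint_left.1 hdisj) rfl h
  have hmem : ∀ v : AnnVert R, v ≠ c → v ∈ t := by
    intro v hv
    have hv' : v ∈ ({c} ∪ t : Set (AnnVert R)) := by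
      rw [huniv]
      exact Set.mem_univ v
    rcases hv' with h | h
    · exact absurd h hv
    · exact h
  have s1v : ∀ v : AnnVert R, v ≠ c → c.1 * v.1 = ⊥ := by
    intro v hv
    exact ((hadj c v).2 (Or.inl ⟨rfl, hmem v hv⟩)).2
  have s2v : ∀ u v : AnnVert R, u ≠ c → v ≠ c → u ≠ v → u.1 * v.1 ≠ ⊥ := by
    intro u v hu hv huv h
    have hAdj : (annihilatingIdealGraph R).Adj u v := ⟨huv, h⟩
    rcases (hadj u v).1 hAdj with ⟨h1, -⟩ | ⟨-, h2⟩
    · exact hu (by simpa using h1)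
    · exact hv (by simpa using h2)
  have s1 : ∀ L : Ideal R, L ≠ ⊥ → L.annihilator ≠ ⊥ → L ≠ c.1 → c.1 * L = ⊥ := by
    intro L h1 h2 h3
    exact s1v ⟨L, h1, h2⟩ (fun he => h3 (congrArg Subtype.val he))
  have s2 : ∀ L₁ L₂ : Ideal R, L₁ ≠ ⊥ → L₁.annihilator ≠ ⊥ → L₂ ≠ ⊥ → L₂.annihilator ≠ ⊥ →
      L₁ ≠ L₂ → L₁ ≠ c.1 → L₂ ≠ c.1 → L₁ * L₂ ≠ ⊥ := by
    intro L₁ L₂ ha hb hc' hd he hf hg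
    exact s2v ⟨L₁, ha, hb⟩ ⟨L₂, hc', hd⟩
      (fun h => hf (congrArg Subtype.val h))
      (fun h => hg (congrArg Subtype.val h))
      (fun h => he (congrArg Subtype.val h))
  refine ⟨hIJ, ?_⟩
  intro hset
  have hsub : J.1.annihilator ≤ I.1.annihilator ∨ I.1.annihilator ≤ J.1.annihilator := by
    by_contra h
    push_neg at h
    obtain ⟨h1, h2⟩ := h
    obtain ⟨a, haJ, haI⟩ := SetLike.not_le_iff_exists.1 h1
    obtain ⟨b, hbI, hbJ⟩ := SetLike.not_le_iff_exists.1 h2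
    have haK : a ∈ (I.1 * J.1).annihilator :=
      Submodule.annihilator_mono Ideal.mul_le_right haJ
    have hbK : b ∈ (I.1 * J.1).annihilator :=
      Submodule.annihilator_mono Ideal.mul_le_left hbI
    have hab : a + b ∈ (I.1 * J.1).annihilator := add_mem haK hbK
    have hab' : a + b ∈ ((I.1.annihilator : Set R) ∪ (J.1.annihilator : Set R)) := by
      rw [← hset]
      exact hab
    rcases hab' with h | h
    · apply haI
      have hbmem : b ∈ I.1.annihilator := hbI
      have : (a + b) - b ∈ I.1.annihilator := Submodule.sub_mem _ h hbmem
      simpa using this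
    · apply hbJ
      have hamem : a ∈ J.1.annihilator := haJ
      have : (a + b) - a ∈ J.1.annihilator := Submodule.sub_mem _ h hamem
      simpa using this
  have hIJ' : I.1 ≠ J.1 := fun h => hIJ (Subtype.ext h)
  rcases hsub with h | h
  · have hunion : ((I.1.annihilator : Set R) ∪ (J.1.annihilator : Set R))
        = (I.1.annihilator : Set R) :=
      Set.union_eq_self_of_subset_right h
    have hIdeq : (I.1 * J.1).annihilator = I.1.annihilator :=
      SetLike.coe_injective (hset.trans hunion)
    exact stmt19_core c.1 I.1 J.1 c.2.1 I.2.1 I.2.2 J.2.1 J.2.2 s1 s2 hIJ' h hIdeq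
  · have hunion : ((I.1.annihilator : Set R) ∪ (J.1.annihilator : Set R))
        = (J.1.annihilator : Set R) :=
      Set.union_eq_self_of_subset_left h
    have hIdeq : (J.1 * I.1).annihilator = J.1.annihilator := by
      rw [mul_comm]
      exact SetLike.coe_injective (hset.trans hunion)
    exact stmt19_core c.1 J.1 I.1 c.2.1 J.2.1 J.2.2 I.2.1 I.2.2 s1 s2 hIJ'.symm h hIdeq
end
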